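/- arXiv:2603.11134 — 7 statements merged into one kernel-verified Lean document; each statement's English description precedes it below -/
import Mathlib

section
/- Let Y be a finite nonempty type, P a positive probability measure on Y, and Y_1,...,Y_{N+1} an i.i.d. sample from P. Then for every y in Y, the expectation of (N+1)/(|{n in [N] : Y_n = y}| + 1) is at most 1/P({y}). -/
open Finset

lemma sum_prod_pow_aux {Y : Type*} [Fintype Y] [DecidableEq Y] (P : Y → ℝ) :
    ∀ M : ℕ, ∑ ω : Fin M → Y, ∏ n, P (ω n) = (∑ z, P z) ^ M := by
  intro M
  induction M with
  | zero => simp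
  | succ M ih =>
    rw [← Equiv.sum_comp (Fin.consEquiv (fun _ : Fin (M+1) => Y))
      (fun ω => ∏ n, P (ω n))]
    rw [Fintype.sum_prod_type]
    simp only [Fin.consEquiv_apply, Fin.prod_univ_succ, Fin.cons_zero, Fin.cons_succ]
    rw [pow_succ, mul_comm ((∑ z, P z)^M), ← ih]
    rw [← Finset.sum_mul_sum]

/-- Simple conformal e-prediction validity: for an i.i.d. sample `Y₁,…,Y_{N+1}`
from a positive probability measure `P` on a finite nonempty type `Y`,
`E[(N+1)/(|{n ∈ [N] : Yₙ = y}|+1)] ≤ 1/P({y})`. -/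
theorem conformal_e_prediction_validity
    {Y : Type*} [Fintype Y] [Nonempty Y] [DecidableEq Y]
    (P : Y → ℝ) (hPpos : ∀ y, 0 < P y) (hPsum : ∑ y, P y = 1)
    (N : ℕ) (y : Y) :
    ∑ ω : Fin (N + 1) → Y, (∏ n, P (ω n)) *
      ((N + 1 : ℝ) /
        (((univ.filter (fun n : Fin N => ω n.castSucc = y)).card : ℝ) + 1))
      ≤ 1 / P y := by
  set w : (Fin (N+1) → Y) → ℝ := fun ω => ∏ n, P (ω n) with hw
  set m : (Fin (N+1) → Y) → ℝ := fun ω => ∑ n, if ω n = y then (1:ℝ) else 0 with hm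
  set S : ℝ := ∑ ω : Fin (N + 1) → Y, w ω *
      ((N + 1 : ℝ) /
        (((univ.filter (fun n : Fin N => ω n.castSucc = y)).card : ℝ) + 1)) with hS
  set Q : ℝ := ∑ ω' : Fin N → Y, (∏ j, P (ω' j)) *
      ((N + 1 : ℝ) / ((∑ j, if ω' j = y then (1:ℝ) else 0) + 1)) with hQ
  set T : Fin (N+1) → ℝ :=
    fun i => ∑ ω : Fin (N+1) → Y, w ω * ((N+1 : ℝ) / m ω) * (if ω i = y then 1 else 0) with hT
  have hwnn : ∀ ω : Fin (N+1) → Y, 0 ≤ w ω := fun ω =>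
    Finset.prod_nonneg fun n _ => (hPpos _).le
  have hwsum : ∑ ω : Fin (N+1) → Y, w ω = 1 := by
    rw [hw, sum_prod_pow_aux P (N+1), hPsum, one_pow]
  have hcard : ∀ ω' : Fin N → Y,
      ((univ.filter (fun n : Fin N => ω' n = y)).card : ℝ)
        = ∑ j, if ω' j = y then (1:ℝ) else 0 := by
    intro ω'; rw [Finset.sum_boole]
  -- the reindexing equivalence
  set e : Y × (Fin N → Y) ≃ (Fin (N+1) → Y) :=
    Fin.insertNthEquiv (fun _ : Fin (N+1) => Y) (Fin.last N) with he
  have he1 : ∀ (z : Y) (ω' : Fin N → Y), e (z, ω') (Fin.last N) = z := by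
    intro z ω'
    simp [he, Fin.insertNth_apply_same]
  have he2 : ∀ (z : Y) (ω' : Fin N → Y) (j : Fin N), e (z, ω') j.castSucc = ω' j := by
    intro z ω' j
    have : j.castSucc = (Fin.last N).succAbove j := by simp
    rw [this]
    simp [he, Fin.insertNth_apply_succAbove]
  have hew : ∀ (z : Y) (ω' : Fin N → Y), w (e (z, ω')) = P z * ∏ j, P (ω' j) := by
    intro z ω'
    rw [hw]
    beta_reduce
    rw [Fin.prod_univ_succAbove (fun n => P (e (z, ω') n)) (Fin.last N)]
    simp only [he1]
    congr 1
    apply Finset.prod_congr rfl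
    intro j _
    rw [show (Fin.last N).succAbove j = j.castSucc by simp, he2]
  have hem : ∀ (z : Y) (ω' : Fin N → Y),
      m (e (z, ω')) = (if z = y then (1:ℝ) else 0) + ∑ j, if ω' j = y then (1:ℝ) else 0 := by
    intro z ω'
    rw [hm]
    beta_reduce
    rw [Fin.sum_univ_succAbove (fun n => if e (z, ω') n = y then (1:ℝ) else 0) (Fin.last N)]
    simp only [he1]
    congr 1
    apply Finset.sum_congr rfl
    intro j _
    rw [show (Fin.last N).succAbove j = j.castSucc by simp, he2]
  -- S = Q
  have hSQ : S = Q := by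
    rw [hS, ← Equiv.sum_comp e (fun ω : Fin (N+1) → Y => w ω *
      ((N + 1 : ℝ) /
        (((univ.filter (fun n : Fin N => ω n.castSucc = y)).card : ℝ) + 1))),
      Fintype.sum_prod_type]
    have : ∀ (z : Y) (ω' : Fin N → Y),
        w (e (z, ω')) * ((N + 1 : ℝ) /
          (((univ.filter (fun n : Fin N => e (z, ω') n.castSucc = y)).card : ℝ) + 1))
        = P z * ((∏ j, P (ω' j)) *
          ((N + 1 : ℝ) / ((∑ j, if ω' j = y then (1:ℝ) else 0) + 1))) := by
      intro z ω'
      have hfc : (univ.filter (fun n : Fin N => e (z, ω') n.castSucc = y))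
          = univ.filter (fun n : Fin N => ω' n = y) := by
        apply Finset.filter_congr
        intro n _
        rw [he2]
      rw [hfc, hew, hcard]
      ring
    simp only [this]
    rw [hQ, ← Finset.sum_mul_sum, hPsum, one_mul]
  -- T (last) = P y * Q
  have hTQ : T (Fin.last N) = P y * Q := by
    rw [hT]
    rw [show (fun i => ∑ ω : Fin (N+1) → Y, w ω * ((N+1 : ℝ) / m ω) *
        (if ω i = y then 1 else 0)) (Fin.last N)
      = ∑ ω : Fin (N+1) → Y, w ω * ((N+1 : ℝ) / m ω) *
        (if ω (Fin.last N) = y then 1 else 0) from rfl]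
    rw [← Equiv.sum_comp e (fun ω : Fin (N+1) → Y => w ω * ((N+1 : ℝ) / m ω) *
        (if ω (Fin.last N) = y then 1 else 0)), Fintype.sum_prod_type]
    have key : ∀ (z : Y) (ω' : Fin N → Y),
        w (e (z, ω')) * ((N+1 : ℝ) / m (e (z, ω'))) * (if e (z, ω') (Fin.last N) = y then 1 else 0)
        = if z = y then (P y * ((∏ j, P (ω' j)) *
            ((N + 1 : ℝ) / ((∑ j, if ω' j = y then (1:ℝ) else 0) + 1)))) else 0 := by
      intro z ω'
      rw [hew, hem, he1]
      by_cases hz : z = y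
      · subst hz
        simp only [if_pos rfl, if_true]
        rw [add_comm (1:ℝ)]
        ring
      · simp [hz]
    simp only [key]
    rw [Finset.sum_comm]
    simp only [Finset.sum_ite_eq' univ y, mem_univ, if_true]
    rw [hQ, Finset.mul_sum]
  -- all T i agree
  have claim2 : ∀ i : Fin (N+1), T i = T (Fin.last N) := by
    intro i
    have hre := Equiv.sum_comp ((Equiv.swap i (Fin.last N)).arrowCongr (Equiv.refl Y))
      (fun ω : Fin (N+1) → Y => w ω * ((N+1 : ℝ) / m ω) * (if ω (Fin.last N) = y then 1 else 0))
    simp only [hT]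
    rw [← hre]
    apply Finset.sum_congr rfl
    intro ω _
    have harr : ∀ j, ((Equiv.swap i (Fin.last N)).arrowCongr (Equiv.refl Y)) ω j
        = ω (Equiv.swap i (Fin.last N) j) := by
      intro j
      simp [Equiv.arrowCongr, Equiv.symm_apply_eq]
    have hww : w (((Equiv.swap i (Fin.last N)).arrowCongr (Equiv.refl Y)) ω) = w ω := by
      rw [hw]
      simp only [harr]
      exact Equiv.prod_comp (Equiv.swap i (Fin.last N)) (fun n => P (ω n))
    have hmm : m (((Equiv.swap i (Fin.last N)).arrowCongr (Equiv.refl Y)) ω) = m ω := by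
      rw [hm]
      simp only [harr]
      exact Equiv.sum_comp (Equiv.swap i (Fin.last N)) (fun n => if ω n = y then (1:ℝ) else 0)
    rw [hww, hmm, harr, Equiv.swap_apply_right]
  -- (N+1) * T (last N) ≤ N+1
  have claim3 : ((N:ℝ)+1) * T (Fin.last N) ≤ (N:ℝ)+1 := by
    have hsum : ∑ i : Fin (N+1), T i = ((N:ℝ)+1) * T (Fin.last N) := by
      rw [Finset.sum_congr rfl (fun i _ => claim2 i), Finset.sum_const, card_univ,
        Fintype.card_fin, nsmul_eq_mul]
      push_cast
      ring
    rw [← hsum, hT]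
    rw [Finset.sum_comm]
    calc ∑ ω : Fin (N+1) → Y, ∑ i : Fin (N+1),
          w ω * ((N+1 : ℝ) / m ω) * (if ω i = y then 1 else 0)
        = ∑ ω : Fin (N+1) → Y, w ω * (((N+1 : ℝ) / m ω) * m ω) := by
          apply Finset.sum_congr rfl
          intro ω _
          have hmω : (∑ i : Fin (N+1), if ω i = y then (1:ℝ) else 0) = m ω := rfl
          rw [← Finset.mul_sum, hmω, mul_assoc]
      _ ≤ ∑ ω : Fin (N+1) → Y, w ω * ((N:ℝ)+1) := by
          apply Finset.sum_le_sum
          intro ω _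
          apply mul_le_mul_of_nonneg_left _ (hwnn ω)
          rcases eq_or_ne (m ω) 0 with h | h
          · rw [h, mul_zero]; positivity
          · rw [div_mul_cancel₀ _ h]
      _ = (N:ℝ)+1 := by rw [← Finset.sum_mul, hwsum, one_mul]
  -- conclude
  have hN : (0:ℝ) < (N:ℝ)+1 := by positivity
  have hTle : T (Fin.last N) ≤ 1 :=
    le_of_mul_le_mul_left (by rw [mul_one]; exact claim3) hN
  have hT1 : P y * S ≤ 1 := by
    rw [hSQ, ← hTQ]
    exact hTle
  rw [le_div_iff₀ (hPpos y), mul_comm]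
  exact hT1
end

section
/- Let Y be a finite nonempty type, P a positive probability measure on Y, and Y_1,...,Y_{N+1} i.i.d. from P. Define the estimate P_hat({y}) := (|{n in [N] : Y_n = y}| + 1)/(N+1). Then for any probability measure Q on Y, E[ Q({Y_{N+1}})/P_hat({Y_{N+1}}) ] <= 1, i.e. this ratio is an e-variable. -/
open Finset

/-- For an i.i.d. sample `Y₁,…,Y_{N+1}` from a positive probability measure `P`
on a finite nonempty type, with the estimate `P̂({y}) = (|{n ∈ [N] : Yₙ = y}|+1)/(N+1)`,
for any probability measure `Q` on `Y` we have `E[Q({Y_{N+1}})/P̂({Y_{N+1}})] ≤ 1`. -/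
theorem conformal_e_variable
    {Y : Type*} [Fintype Y] [Nonempty Y] [DecidableEq Y]
    (P : Y → ℝ) (hPpos : ∀ y, 0 < P y) (hPsum : ∑ y, P y = 1)
    (Q : Y → ℝ) (hQnonneg : ∀ y, 0 ≤ Q y) (hQsum : ∑ y, Q y = 1)
    (N : ℕ) :
    ∑ ω : Fin (N + 1) → Y, (∏ n, P (ω n)) *
      (Q (ω (Fin.last N)) /
        ((((univ.filter (fun n : Fin N => ω n.castSucc = ω (Fin.last N))).card : ℝ) + 1)
          / (N + 1)))
      ≤ 1 := by
  classical
  set Pw : (Fin (N+1) → Y) → ℝ := fun ω => ∏ n, P (ω n) with hPwdef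
  have hPwnn : ∀ ω, 0 ≤ Pw ω := fun ω => Finset.prod_nonneg fun n _ => (hPpos _).le
  have hPwsum : ∑ ω : Fin (N+1) → Y, Pw ω = 1 := by
    rw [show (1:ℝ) = ∏ _i : Fin (N+1), ∑ y, P y by simp [hPsum]]
    rw [Finset.prod_univ_sum]
    simp [Fintype.piFinset_univ, Pw]
  set c : Y → (Fin (N+1) → Y) → ℕ :=
    fun y ω => (univ.filter fun n => ω n = y).card with hcdef
  -- count over Fin (N+1) splits as count over Fin N plus 1 when last matches
  have hcount : ∀ ω : Fin (N+1) → Y,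
      ((univ.filter (fun n : Fin N => ω n.castSucc = ω (Fin.last N))).card : ℝ) + 1
        = (c (ω (Fin.last N)) ω : ℝ) := by
    intro ω
    have : c (ω (Fin.last N)) ω
        = (univ.filter (fun n : Fin N => ω n.castSucc = ω (Fin.last N))).card + 1 := by
      rw [hcdef]
      simp only [Finset.card_filter]
      rw [Fin.sum_univ_castSucc]
      simp
    rw [this]
    push_cast
    ring
  have hcpos : ∀ ω : Fin (N+1) → Y, 0 < (c (ω (Fin.last N)) ω : ℝ) := by
    intro ω
    rw [← hcount ω]
    positivity
  -- invariance under permutations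
  have hPwperm : ∀ (σ : Equiv.Perm (Fin (N+1))) (ω : Fin (N+1) → Y),
      Pw (ω ∘ σ) = Pw ω := by
    intro σ ω
    exact Equiv.prod_comp σ (fun n => P (ω n))
  have hcperm : ∀ (σ : Equiv.Perm (Fin (N+1))) (y : Y) (ω : Fin (N+1) → Y),
      c y (ω ∘ σ) = c y ω := by
    intro σ y ω
    have h : (univ.filter fun n => (ω ∘ σ) n = y)
        = (univ.filter fun n => ω n = y).map σ.symm.toEmbedding := by
      ext n
      simp [Equiv.symm_apply_eq, eq_comm]
    show (univ.filter fun n => (ω ∘ σ) n = y).card = (univ.filter fun n => ω n = y).card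
    rw [h, Finset.card_map]
  -- exchangeability: each coordinate is as likely to match as the last one
  have hswap : ∀ (y : Y) (m : Fin (N+1)),
      (∑ ω : Fin (N+1) → Y, if ω m = y then Pw ω / c y ω else 0)
        = ∑ ω : Fin (N+1) → Y, if ω (Fin.last N) = y then Pw ω / c y ω else 0 := by
    intro y m
    apply Fintype.sum_equiv (Equiv.arrowCongr (Equiv.swap m (Fin.last N)) (Equiv.refl Y))
    intro ω
    have he : (Equiv.arrowCongr (Equiv.swap m (Fin.last N)) (Equiv.refl Y)) ω
        = ω ∘ (Equiv.swap m (Fin.last N)) := by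
      ext n
      simp [Equiv.arrowCongr]
    rw [he]
    have hlast : (ω ∘ (Equiv.swap m (Fin.last N))) (Fin.last N) = ω m := by
      simp
    rw [hlast, hPwperm, hcperm]
  -- key inequality per label y
  have key : ∀ y : Y,
      (∑ ω : Fin (N+1) → Y,
        if ω (Fin.last N) = y then Pw ω * ((N+1) / c y ω) else 0) ≤ 1 := by
    intro y
    set S : ℝ := ∑ ω : Fin (N+1) → Y,
      if ω (Fin.last N) = y then Pw ω / c y ω else 0 with hSdef
    have h1 : (∑ ω : Fin (N+1) → Y,
        if ω (Fin.last N) = y then Pw ω * ((N+1) / c y ω) else 0) = (N+1 : ℝ) * S := by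
      rw [hSdef, Finset.mul_sum]
      apply Finset.sum_congr rfl
      intro ω _
      rw [mul_ite, mul_zero]
      congr 1
      ring
    have h2 : (N+1 : ℝ) * S
        = ∑ m : Fin (N+1), ∑ ω : Fin (N+1) → Y, if ω m = y then Pw ω / c y ω else 0 := by
      rw [Finset.sum_congr rfl (fun m _ => hswap y m)]
      simp [hSdef, mul_comm]
    have h3 : (∑ m : Fin (N+1), ∑ ω : Fin (N+1) → Y,
        if ω m = y then Pw ω / c y ω else 0) ≤ 1 := by
      rw [Finset.sum_comm]
      calc (∑ ω : Fin (N+1) → Y, ∑ m : Fin (N+1),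
            if ω m = y then Pw ω / c y ω else 0)
          = ∑ ω : Fin (N+1) → Y, (c y ω : ℝ) * (Pw ω / c y ω) := by
            apply Finset.sum_congr rfl
            intro ω _
            rw [← Finset.sum_filter, Finset.sum_const, nsmul_eq_mul]
        _ ≤ ∑ ω : Fin (N+1) → Y, Pw ω := by
            apply Finset.sum_le_sum
            intro ω _
            rcases Nat.eq_zero_or_pos (c y ω) with h | h
            · simp [h, hPwnn ω]
            · have : (c y ω : ℝ) ≠ 0 := by positivity
              rw [mul_div_cancel₀ _ this]
        _ = 1 := hPwsum
    rw [h1, h2]; exact h3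
  -- assemble
  have hterm : ∀ ω : Fin (N+1) → Y,
      Pw ω * (Q (ω (Fin.last N)) /
        ((((univ.filter (fun n : Fin N => ω n.castSucc = ω (Fin.last N))).card : ℝ) + 1)
          / (N + 1)))
      = Q (ω (Fin.last N)) * (Pw ω * ((N+1) / c (ω (Fin.last N)) ω)) := by
    intro ω
    rw [hcount ω]
    have hc0 : (c (ω (Fin.last N)) ω : ℝ) ≠ 0 := ne_of_gt (hcpos ω)
    field_simp
  rw [Finset.sum_congr rfl (fun ω _ => hterm ω)]
  have hgroup : (∑ ω : Fin (N+1) → Y,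
      Q (ω (Fin.last N)) * (Pw ω * ((N+1) / c (ω (Fin.last N)) ω)))
      = ∑ y : Y, Q y * ∑ ω : Fin (N+1) → Y,
          if ω (Fin.last N) = y then Pw ω * ((N+1) / c y ω) else 0 := by
    have step1 : ∀ ω : Fin (N+1) → Y,
        Q (ω (Fin.last N)) * (Pw ω * ((N+1) / c (ω (Fin.last N)) ω))
        = ∑ y : Y, if ω (Fin.last N) = y then Q y * (Pw ω * ((N+1) / c y ω)) else 0 := by
      intro ω
      rw [Finset.sum_ite_eq univ (ω (Fin.last N))]
      simp
    rw [Finset.sum_congr rfl (fun ω _ => step1 ω), Finset.sum_comm]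
    apply Finset.sum_congr rfl
    intro y _
    rw [Finset.mul_sum]
    apply Finset.sum_congr rfl
    intro ω _
    rw [mul_ite, mul_zero]
  rw [hgroup]
  calc (∑ y : Y, Q y * ∑ ω : Fin (N+1) → Y,
          if ω (Fin.last N) = y then Pw ω * ((N+1) / c y ω) else 0)
      ≤ ∑ y : Y, Q y * 1 :=
        Finset.sum_le_sum fun y _ => mul_le_mul_of_nonneg_left (key y) (hQnonneg y)
    _ = 1 := by simp [hQsum]
end

section
/- Let X and Y be finite nonempty types, P a positive probability measure on X × Y, and (X_1,Y_1),...,(X_{N+1},Y_{N+1}) i.i.d. from P. Fix x in X and y in Y. Then, conditionally on X_1,...,X_N, E[ (|{n in [N] : X_n = x}| + 1)/(|{n in [N] : (X_n,Y_n) = (x,y)}| + 1) | X_1,...,X_N ] <= 1/P(Y = y | X = x). -/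
open Finset

lemma sum_prod_swap_aux {ι κ M : Type*} [Fintype ι] [DecidableEq ι] [Fintype κ]
    [CommSemiring M] (f : ι → κ → M) :
    ∑ g : ι → κ, ∏ i, f i (g i) = ∏ i, ∑ j, f i j := by
  rw [Finset.prod_univ_sum, Fintype.piFinset_univ]

set_option maxHeartbeats 1000000

/-- Object-conditional conformal e-prediction validity. For an i.i.d. sample
`(X₁,Y₁),…,(X_{N+1},Y_{N+1})` from a positive probability measure `P` on `X × Y`,
conditionally on the objects `X₁,…,X_N` (i.e., for any fixed values `xs` of the
objects, the labels being independent with law `P(·∣Xₙ)`),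
`E[(|{n : Xₙ = x}|+1)/(|{n : (Xₙ,Yₙ) = (x,y)}|+1) ∣ X₁,…,X_N] ≤ 1/P(Y=y ∣ X=x)`. -/
theorem conditional_conformal_e_prediction_validity
    {X Y : Type*} [Fintype X] [Nonempty X] [Fintype Y] [Nonempty Y]
    [DecidableEq X] [DecidableEq Y]
    (P : X × Y → ℝ) (hPpos : ∀ p, 0 < P p) (hPsum : ∑ p, P p = 1)
    (N : ℕ) (x : X) (y : Y) (xs : Fin N → X) :
    ∑ ys : Fin N → Y,
      (∏ n, P (xs n, ys n) / ∑ y', P (xs n, y')) *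
        ((((univ.filter (fun n : Fin N => xs n = x)).card : ℝ) + 1) /
          (((univ.filter (fun n : Fin N => (xs n, ys n) = (x, y))).card : ℝ) + 1))
      ≤ 1 / (P (x, y) / ∑ y', P (x, y')) := by
  classical
  have hsumpos : ∀ x0 : X, 0 < ∑ y', P (x0, y') :=
    fun x0 => Finset.sum_pos (fun y' _ => hPpos _) ⟨Classical.arbitrary Y, mem_univ _⟩
  set q : ℝ := P (x, y) / ∑ y', P (x, y') with hq
  have hq0 : 0 < q := div_pos (hPpos _) (hsumpos x)
  have hq1 : q ≤ 1 := by
    rw [hq, div_le_one (hsumpos x)]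
    exact Finset.single_le_sum (fun y' _ => (hPpos _).le) (mem_univ y)
  set w : Fin N → Y → ℝ := fun n y' => P (xs n, y') / ∑ y'', P (xs n, y'') with hw
  have hwsum : ∀ n, ∑ y', w n y' = 1 := by
    intro n
    rw [hw]
    simp only
    rw [← Finset.sum_div, div_self (hsumpos (xs n)).ne']
  set K : ℕ := (univ.filter (fun n : Fin N => xs n = x)).card with hK
  set S : (Fin N → Y) → ℕ :=
    fun ys => (univ.filter (fun n : Fin N => (xs n, ys n) = (x, y))).card with hS
  -- generating function identity
  have hgen : ∀ t : ℝ,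
      ∑ ys : Fin N → Y, (∏ n, w n (ys n)) * t ^ S ys = ((1 - q) + q * t) ^ K := by
    intro t
    have h1 : ∀ ys : Fin N → Y,
        (∏ n, w n (ys n)) * t ^ S ys
          = ∏ n, (w n (ys n) * (if (xs n, ys n) = (x, y) then t else 1)) := by
      intro ys
      rw [Finset.prod_mul_distrib]
      congr 1
      rw [hS]
      simp only
      rw [Finset.prod_ite, Finset.prod_const, Finset.prod_const_one, mul_one]
    have h2 : ∀ n : Fin N, (∑ y', w n y' * (if (xs n, y') = (x, y) then t else 1))
        = if xs n = x then (1 - q) + q * t else 1 := by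
      intro n
      by_cases hn : xs n = x
      · rw [if_pos hn]
        have hterm : ∀ y', w n y' * (if (xs n, y') = (x, y) then t else 1)
            = w n y' + (if y' = y then w n y' * (t - 1) else 0) := by
          intro y'
          simp only [hn, Prod.mk.injEq, true_and]
          by_cases h : y' = y
          · rw [if_pos h, if_pos h]; ring
          · rw [if_neg h, if_neg h]; ring
        rw [Finset.sum_congr rfl (fun y' _ => hterm y'), Finset.sum_add_distrib, hwsum,
          Finset.sum_ite_eq' univ y (fun y' => w n y' * (t - 1)), if_pos (mem_univ y)]
        have hwq : w n y = q := by rw [hw, hq]; simp [hn]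
        rw [hwq]; ring
      · rw [if_neg hn]
        have hterm : ∀ y' : Y, w n y' * (if (xs n, y') = (x, y) then t else 1) = w n y' := by
          intro y'
          have : ¬ ((xs n, y') = (x, y)) := by
            intro h
            exact hn (congrArg Prod.fst h)
          rw [if_neg this, mul_one]
        rw [Finset.sum_congr rfl (fun y' _ => hterm y'), hwsum]
    calc ∑ ys : Fin N → Y, (∏ n, w n (ys n)) * t ^ S ys
        = ∑ ys : Fin N → Y,
            ∏ n, (w n (ys n) * (if (xs n, ys n) = (x, y) then t else 1)) :=
          Finset.sum_congr rfl fun ys _ => h1 ys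
      _ = ∏ n, ∑ y', w n y' * (if (xs n, y') = (x, y) then t else 1) :=
          sum_prod_swap_aux (fun n y' => w n y' * (if (xs n, y') = (x, y) then t else 1))
      _ = ∏ n, (if xs n = x then (1 - q) + q * t else 1) :=
          Finset.prod_congr rfl fun n _ => h2 n
      _ = ((1 - q) + q * t) ^ K := by
          rw [Finset.prod_ite, Finset.prod_const, Finset.prod_const_one, mul_one, hK]
  -- 1/(s+1) = ∫₀¹ t^s
  have hint : ∀ s : ℕ, (1 : ℝ) / ((s : ℝ) + 1) = ∫ t in (0:ℝ)..1, t ^ s := by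
    intro s
    rw [integral_pow]
    simp
  -- rewrite the whole sum as an integral
  have key : ∑ ys : Fin N → Y, (∏ n, w n (ys n)) * (((K : ℝ) + 1) / ((S ys : ℝ) + 1))
      = ((K : ℝ) + 1) * ∫ t in (0:ℝ)..1, ((1 - q) + q * t) ^ K := by
    have hsplit : ∀ ys : Fin N → Y,
        (∏ n, w n (ys n)) * (((K : ℝ) + 1) / ((S ys : ℝ) + 1))
          = ((K : ℝ) + 1) * ((∏ n, w n (ys n)) * (1 / ((S ys : ℝ) + 1))) := by
      intro ys; ring
    rw [Finset.sum_congr rfl (fun ys _ => hsplit ys), ← Finset.mul_sum]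
    congr 1
    calc ∑ ys : Fin N → Y, (∏ n, w n (ys n)) * (1 / ((S ys : ℝ) + 1))
        = ∑ ys : Fin N → Y, ∫ t in (0:ℝ)..1, (∏ n, w n (ys n)) * t ^ S ys := by
          refine Finset.sum_congr rfl fun ys _ => ?_
          rw [hint (S ys), intervalIntegral.integral_const_mul]
      _ = ∫ t in (0:ℝ)..1, ∑ ys : Fin N → Y, (∏ n, w n (ys n)) * t ^ S ys := by
          rw [intervalIntegral.integral_finset_sum]
          intro ys _
          exact Continuous.intervalIntegrable (by continuity) _ _
      _ = ∫ t in (0:ℝ)..1, ((1 - q) + q * t) ^ K :=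
          intervalIntegral.integral_congr fun t _ => hgen t
  -- compute/bound the integral
  have hintval : (∫ t in (0:ℝ)..1, ((1 - q) + q * t) ^ K) ≤ 1 / (((K : ℝ) + 1) * q) := by
    have hcomp : (∫ t in (0:ℝ)..1, (fun u : ℝ => u ^ K) (q * t + (1 - q)))
        = q⁻¹ • ∫ u in (q * 0 + (1 - q))..(q * 1 + (1 - q)), (fun u : ℝ => u ^ K) u :=
      intervalIntegral.integral_comp_mul_add (fun u : ℝ => u ^ K) hq0.ne' (1 - q)
    have heq : (∫ t in (0:ℝ)..1, ((1 - q) + q * t) ^ K)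
        = q⁻¹ * ((1 ^ (K + 1) - (1 - q) ^ (K + 1)) / ((K : ℝ) + 1)) := by
      have h0 : q * 0 + (1 - q) = 1 - q := by ring
      have h1 : q * 1 + (1 - q) = 1 := by ring
      have hfun : ∀ t : ℝ, ((1 - q) + q * t) ^ K = (fun u : ℝ => u ^ K) (q * t + (1 - q)) := by
        intro t; simp only []; ring_nf
      calc (∫ t in (0:ℝ)..1, ((1 - q) + q * t) ^ K)
          = (∫ t in (0:ℝ)..1, (fun u : ℝ => u ^ K) (q * t + (1 - q))) := by
            exact intervalIntegral.integral_congr fun t _ => hfun t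
        _ = q⁻¹ • ∫ u in (q * 0 + (1 - q))..(q * 1 + (1 - q)), (fun u : ℝ => u ^ K) u := hcomp
        _ = q⁻¹ * ((1 ^ (K + 1) - (1 - q) ^ (K + 1)) / ((K : ℝ) + 1)) := by
            rw [h0, h1]
            simp only [smul_eq_mul]
            congr 1
            rw [integral_pow]
    rw [heq]
    have hKpos : (0 : ℝ) < (K : ℝ) + 1 := by positivity
    have hnn : (0 : ℝ) ≤ (1 - q) ^ (K + 1) := pow_nonneg (by linarith) _
    rw [one_div, mul_inv]
    have h2 : (1 ^ (K + 1) - (1 - q) ^ (K + 1)) / ((K : ℝ) + 1) ≤ ((K : ℝ) + 1)⁻¹ := by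
      rw [div_le_iff₀ hKpos, one_pow]
      have : ((K : ℝ) + 1)⁻¹ * ((K : ℝ) + 1) = 1 := inv_mul_cancel₀ hKpos.ne'
      rw [this]
      linarith
    calc q⁻¹ * ((1 ^ (K + 1) - (1 - q) ^ (K + 1)) / ((K : ℝ) + 1))
        ≤ q⁻¹ * ((K : ℝ) + 1)⁻¹ := by
          exact mul_le_mul_of_nonneg_left h2 (inv_nonneg.mpr hq0.le)
      _ = ((K : ℝ) + 1)⁻¹ * q⁻¹ := by ring
  -- conclude
  have hfinal : ((K : ℝ) + 1) * (∫ t in (0:ℝ)..1, ((1 - q) + q * t) ^ K) ≤ 1 / q := by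
    have hKpos : (0 : ℝ) ≤ (K : ℝ) + 1 := by positivity
    calc ((K : ℝ) + 1) * (∫ t in (0:ℝ)..1, ((1 - q) + q * t) ^ K)
        ≤ ((K : ℝ) + 1) * (1 / (((K : ℝ) + 1) * q)) :=
          mul_le_mul_of_nonneg_left hintval hKpos
      _ = 1 / q := by
          field_simp
  calc ∑ ys : Fin N → Y,
      (∏ n, P (xs n, ys n) / ∑ y', P (xs n, y')) *
        ((((univ.filter (fun n : Fin N => xs n = x)).card : ℝ) + 1) /
          (((univ.filter (fun n : Fin N => (xs n, ys n) = (x, y))).card : ℝ) + 1))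
      = ∑ ys : Fin N → Y, (∏ n, w n (ys n)) * (((K : ℝ) + 1) / ((S ys : ℝ) + 1)) := rfl
    _ = ((K : ℝ) + 1) * ∫ t in (0:ℝ)..1, ((1 - q) + q * t) ^ K := key
    _ ≤ 1 / q := hfinal
end

section
/- Let X and Y be finite nonempty types. Suppose X_1,...,X_{N+1} are arbitrary random variables in X, and conditionally on (X_1,...,X_{N+1}) the labels Y_1,...,Y_{N+1} are independent with Y_n distributed according to a fixed conditional law Q(· | X_n) with Q(y|x) > 0 for all x,y. Fix x, y. Then E[ (|{n in [N] : X_n = x}| + 1)/(|{n in [N] : (X_n,Y_n) = (x,y)}| + 1) | X_1,...,X_N ] <= 1/Q(y|x). -/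
open Finset

section aux
variable {X Y I : Type*} [Fintype Y] [Fintype I] [DecidableEq I] [DecidableEq X] [DecidableEq Y]

noncomputable def cval (Q : X → Y → ℝ) (xs' : I → X) (x : X) (y : Y) (m : I) : ℝ :=
  ∑ zs : I → Y, (∏ i, Q (xs' i) (zs i)) *
    ((if zs m = y then (1:ℝ) else 0) /
      ∑ i, (if xs' i = x ∧ zs i = y then (1:ℝ) else 0))

lemma cval_eq (Q : X → Y → ℝ) (xs' : I → X) (x : X) (y : Y) {m i0 : I}
    (hm : xs' m = x) (h0 : xs' i0 = x) :
    cval Q xs' x y m = cval Q xs' x y i0 := by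
  classical
  set e := Equiv.swap m i0 with he
  have hxs : ∀ i, xs' (e i) = xs' i := by
    intro i
    rcases eq_or_ne i m with rfl | him
    · simp [he, hm, h0]
    rcases eq_or_ne i i0 with rfl | hii
    · simp [he, hm, h0]
    · rw [he, Equiv.swap_apply_of_ne_of_ne him hii]
  have hinv : ∀ zs : I → Y, (zs ∘ e) ∘ e = zs := by
    intro zs; funext i; simp [he, Function.comp]
  unfold cval
  refine Fintype.sum_bijective (fun zs => zs ∘ e) ?_ _ _ ?_
  · exact Function.bijective_iff_has_inverse.2 ⟨fun zs => zs ∘ e, hinv, hinv⟩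
  · intro zs
    have h1 : ∏ i, Q (xs' i) ((zs ∘ e) i) = ∏ i, Q (xs' i) (zs i) := by
      calc ∏ i, Q (xs' i) (zs (e i)) = ∏ i, Q (xs' (e i)) (zs (e i)) := by
            simp_rw [hxs]
        _ = ∏ i, Q (xs' i) (zs i) := Equiv.prod_comp e (fun i => Q (xs' i) (zs i))
    have h2 : ∑ i, (if xs' i = x ∧ (zs ∘ e) i = y then (1:ℝ) else 0)
        = ∑ i, (if xs' i = x ∧ zs i = y then (1:ℝ) else 0) := by
      calc ∑ i, (if xs' i = x ∧ zs (e i) = y then (1:ℝ) else 0)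
          = ∑ i, (if xs' (e i) = x ∧ zs (e i) = y then (1:ℝ) else 0) := by simp_rw [hxs]
        _ = _ := Equiv.sum_comp e (fun i => if xs' i = x ∧ zs i = y then (1:ℝ) else 0)
    rw [h1, h2]
    simp [he, Equiv.swap_apply_right]

lemma cval_bound (Q : X → Y → ℝ) (hQpos : ∀ x y, 0 < Q x y) (hQsum : ∀ x, ∑ y, Q x y = 1)
    (xs' : I → X) (x : X) (y : Y) {i0 : I} (h0 : xs' i0 = x) :
    ((univ.filter (fun i => xs' i = x)).card : ℝ) * cval Q xs' x y i0 ≤ 1 := by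
  classical
  have key : ((univ.filter fun i => xs' i = x).card : ℝ) * cval Q xs' x y i0
      = ∑ m ∈ univ.filter (fun i : I => xs' i = x), cval Q xs' x y m := by
    rw [Finset.sum_congr rfl (fun m hm => cval_eq Q xs' x y (Finset.mem_filter.1 hm).2 h0),
      Finset.sum_const, nsmul_eq_mul]
  rw [key]
  unfold cval
  rw [Finset.sum_comm]
  have hterm : ∀ zs : I → Y,
      (∑ m ∈ univ.filter (fun i : I => xs' i = x),
        (∏ i, Q (xs' i) (zs i)) *
          ((if zs m = y then (1:ℝ) else 0) /
            ∑ i, (if xs' i = x ∧ zs i = y then (1:ℝ) else 0)))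
      ≤ ∏ i, Q (xs' i) (zs i) := by
    intro zs
    set D : ℝ := ∑ i, (if xs' i = x ∧ zs i = y then (1:ℝ) else 0) with hD
    have hsum : ∑ m ∈ univ.filter (fun i : I => xs' i = x),
        (if zs m = y then (1:ℝ) else 0) = D := by
      rw [Finset.sum_filter, hD]
      exact Finset.sum_congr rfl (fun i _ => (ite_and _ _ _ _).symm)
    rw [← Finset.mul_sum, ← Finset.sum_div, hsum]
    have hP : 0 ≤ ∏ i, Q (xs' i) (zs i) :=
      Finset.prod_nonneg (fun i _ => (hQpos _ _).le)
    have hDD : D / D ≤ 1 := by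
      rcases eq_or_ne D 0 with h | h
      · simp [h]
      · rw [div_self h]
    calc (∏ i, Q (xs' i) (zs i)) * (D / D) ≤ (∏ i, Q (xs' i) (zs i)) * 1 :=
          mul_le_mul_of_nonneg_left hDD hP
      _ = _ := mul_one _
  calc ∑ zs : I → Y, ∑ m ∈ univ.filter (fun i : I => xs' i = x),
        (∏ i, Q (xs' i) (zs i)) *
          ((if zs m = y then (1:ℝ) else 0) /
            ∑ i, (if xs' i = x ∧ zs i = y then (1:ℝ) else 0))
      ≤ ∑ zs : I → Y, ∏ i, Q (xs' i) (zs i) :=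
        Finset.sum_le_sum (fun zs _ => hterm zs)
    _ = 1 := by
        rw [show (∑ zs : I → Y, ∏ i, Q (xs' i) (zs i))
            = ∏ i, ∑ y', Q (xs' i) y' by
          rw [Finset.prod_univ_sum]
          rw [Fintype.piFinset_univ]]
        simp [hQsum]

end aux
/-- Conditional conformal e-prediction validity with arbitrary objects: if the
objects `X₁,…,X_{N}` take arbitrary (fixed, i.e. conditioned-upon) values `xs`
and, given the objects, the labels `Y₁,…,Y_N` are independent with `Yₙ`
distributed as the fixed positive conditional law `Q(·∣Xₙ)`, then
`E[(|{n : Xₙ = x}|+1)/(|{n : (Xₙ,Yₙ) = (x,y)}|+1) ∣ X₁,…,X_N] ≤ 1/Q(y∣x)`. -/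
theorem conditional_conformal_arbitrary_objects
    {X Y : Type*} [Fintype X] [Nonempty X] [Fintype Y] [Nonempty Y]
    [DecidableEq X] [DecidableEq Y]
    (Q : X → Y → ℝ) (hQpos : ∀ x y, 0 < Q x y) (hQsum : ∀ x, ∑ y, Q x y = 1)
    (N : ℕ) (x : X) (y : Y) (xs : Fin N → X) :
    ∑ ys : Fin N → Y,
      (∏ n, Q (xs n) (ys n)) *
        ((((univ.filter (fun n : Fin N => xs n = x)).card : ℝ) + 1) /
          (((univ.filter (fun n : Fin N => (xs n, ys n) = (x, y))).card : ℝ) + 1))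
      ≤ 1 / Q x y := by
  classical
  have hq0 : 0 < Q x y := hQpos x y
  set xs' : Option (Fin N) → X := fun i => i.elim x xs with hxs'
  have hnone : xs' none = x := rfl
  have hsome : ∀ n, xs' (some n) = xs n := fun _ => rfl
  set k : ℕ := (univ.filter (fun n : Fin N => xs n = x)).card with hk
  set Sr : (Fin N → Y) → ℝ :=
    fun ys => ∑ n, (if xs n = x ∧ ys n = y then (1:ℝ) else 0) with hSr
  have hScast : ∀ ys : Fin N → Y,
      ((univ.filter (fun n : Fin N => (xs n, ys n) = (x, y))).card : ℝ) = Sr ys := by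
    intro ys
    rw [Finset.card_filter, hSr]
    push_cast
    refine Finset.sum_congr rfl fun n _ => ?_
    simp [Prod.ext_iff]
  have hkcast : ((univ.filter (fun i : Option (Fin N) => xs' i = x)).card : ℝ)
      = (k : ℝ) + 1 := by
    rw [Finset.card_filter, Fintype.sum_option, hk, Finset.card_filter]
    push_cast
    simp [hnone, hsome, add_comm]
  have hbij : Function.Bijective
      (fun p : Y × (Fin N → Y) => (fun i : Option (Fin N) => i.elim p.1 p.2)) := by
    constructor
    · intro p q h
      exact Prod.ext (congrFun h none) (funext fun n => congrFun h (some n))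
    · intro zs
      exact ⟨(zs none, fun n => zs (some n)), by funext i; cases i <;> rfl⟩
  have step1 : cval Q xs' x y none
      = ∑ p : Y × (Fin N → Y),
          (Q x p.1 * ∏ n, Q (xs n) (p.2 n)) *
            ((if p.1 = y then (1:ℝ) else 0) /
              ((if p.1 = y then (1:ℝ) else 0) + Sr p.2)) := by
    unfold cval
    refine (Fintype.sum_bijective _ hbij _ _ ?_).symm
    intro p
    have e1 : (∏ i, Q (xs' i) ((fun i : Option (Fin N) => i.elim p.1 p.2) i))
        = Q x p.1 * ∏ n, Q (xs n) (p.2 n) := by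
      rw [Fintype.prod_option]
      rfl
    have e2 : (∑ i, (if xs' i = x ∧ (fun i : Option (Fin N) => i.elim p.1 p.2) i = y
          then (1:ℝ) else 0))
        = (if p.1 = y then (1:ℝ) else 0) + Sr p.2 := by
      rw [Fintype.sum_option, hSr]
      simp [hnone, hsome]
    rw [e1, e2]
    rfl
  have hcval : cval Q xs' x y none
      = ∑ ys : Fin N → Y, (Q x y * ∏ n, Q (xs n) (ys n)) * (1 / (1 + Sr ys)) := by
    rw [step1, Fintype.sum_prod_type,
      Finset.sum_eq_single y (fun y0 _ hy0 => by simp [hy0]) (by simp)]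
    simp
  rw [le_div_iff₀ hq0]
  calc (∑ ys : Fin N → Y,
        (∏ n, Q (xs n) (ys n)) *
          (((k : ℝ) + 1) /
            (((univ.filter (fun n : Fin N => (xs n, ys n) = (x, y))).card : ℝ) + 1))) * Q x y
      = ((k : ℝ) + 1) * cval Q xs' x y none := by
        rw [hcval, Finset.sum_mul, Finset.mul_sum]
        refine Finset.sum_congr rfl fun ys _ => ?_
        rw [hScast ys]
        ring
    _ ≤ 1 := by rw [← hkcast]; exact cval_bound Q hQpos hQsum xs' x y hnone
end

section
/- Let X, Y, Z be finite nonempty types, P a positive probability measure on X × Y × Z, and (X_n,Y_n,Z_n), n = 1,...,N, an i.i.d. sample from P. Fix x in X and y in Y. Define p_y := sum_{z in Z} P(Z=z)·P(Y=y|X=x,Z=z) and F_y := sum_{z in Z} ((|{n : Z_n=z}|+1)/(N+1)) · ((|{n : (X_n,Y_n,Z_n)=(x,y,z)}|+1)/(|{n : (X_n,Z_n)=(x,z)}|+1)). Then E[ p_y / F_y ] <= 1. -/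
open Finset

/-- Binomial theorem over powersets. -/
lemma my_pb {ι : Type*} [DecidableEq ι] (s : Finset ι) (p q : ℝ) :
    ∑ T ∈ s.powerset, p ^ T.card * q ^ (s.card - T.card) = (p + q) ^ s.card := by
  induction s using Finset.induction_on with
  | empty => simp
  | @insert a s ha ih =>
    rw [Finset.sum_powerset_insert ha, card_insert_of_notMem ha]
    have h1 : ∀ T ∈ s.powerset,
        p ^ T.card * q ^ (s.card + 1 - T.card) = q * (p ^ T.card * q ^ (s.card - T.card)) := by
      intro T hT
      have : T.card ≤ s.card := card_le_card (mem_powerset.mp hT)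
      rw [show s.card + 1 - T.card = (s.card - T.card) + 1 by omega, pow_succ]
      ring
    have h2 : ∀ T ∈ s.powerset,
        p ^ (insert a T).card * q ^ (s.card + 1 - (insert a T).card)
          = p * (p ^ T.card * q ^ (s.card - T.card)) := by
      intro T hT
      have hTs := mem_powerset.mp hT
      have haT : a ∉ T := fun h => ha (hTs h)
      have : T.card ≤ s.card := card_le_card hTs
      rw [card_insert_of_notMem haT,
        show s.card + 1 - (T.card + 1) = s.card - T.card by omega, pow_succ]
      ring
    rw [Finset.sum_congr rfl h1, Finset.sum_congr rfl h2, ← Finset.mul_sum, ← Finset.mul_sum,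
      ih, pow_succ]
    ring

/-- Key binomial bound: `E[1/(k+1)] ≤ 1/((n+1)p)`. -/
lemma my_pb1 {ι : Type*} [DecidableEq ι] (s : Finset ι) (p : ℝ) (hp : 0 < p) (hp1 : p ≤ 1) :
    ∑ T ∈ s.powerset, p ^ T.card * (1 - p) ^ (s.card - T.card) * (1 / ((T.card : ℝ) + 1))
      ≤ 1 / (((s.card : ℝ) + 1) * p) := by
  set n := s.card with hn
  rw [Finset.sum_powerset]
  have hcongr : ∀ j ∈ range (n + 1),
      ∑ T ∈ Finset.powersetCard j s, p ^ T.card * (1 - p) ^ (n - T.card) * (1 / ((T.card : ℝ) + 1))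
        = (n.choose j : ℝ) * (p ^ j * (1 - p) ^ (n - j) * (1 / ((j : ℝ) + 1))) := by
    intro j hj
    rw [Finset.sum_congr rfl (fun T hT => by
      rw [(Finset.mem_powersetCard.mp hT).2]), Finset.sum_const, Finset.card_powersetCard,
      nsmul_eq_mul]
  rw [Finset.sum_congr rfl hcongr, le_div_iff₀ (by positivity), Finset.sum_mul]
  have key : ∀ j ∈ range (n + 1),
      (n.choose j : ℝ) * (p ^ j * (1 - p) ^ (n - j) * (1 / ((j : ℝ) + 1))) * (((n : ℝ) + 1) * p)
        = ((n + 1).choose (j + 1) : ℝ) * (p ^ (j + 1) * (1 - p) ^ ((n + 1) - (j + 1))) := by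
    intro j hj
    have hc : ((n + 1).choose (j + 1) : ℝ) * ((j : ℝ) + 1) = ((n : ℝ) + 1) * (n.choose j : ℝ) := by
      have := Nat.add_one_mul_choose_eq n j
      exact_mod_cast congrArg (fun k : ℕ => (k : ℝ)) this.symm
    have hj1 : ((j : ℝ) + 1) ≠ 0 := by positivity
    rw [Nat.succ_sub_succ, pow_succ]
    field_simp
    linear_combination ((1 - p) ^ (n - j)) * hc.symm
  have hstep : ∀ j ∈ range (n + 1),
      ((n + 1).choose (j + 1) : ℝ) * (p ^ (j + 1) * (1 - p) ^ ((n + 1) - (j + 1)))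
        = p ^ (j + 1) * (1 - p) ^ (n + 1 - (j + 1)) * ((n + 1).choose (j + 1) : ℝ) :=
    fun j _ => by ring
  rw [Finset.sum_congr rfl key, Finset.sum_congr rfl hstep]
  have hbin : ∑ i ∈ range (n + 2), p ^ i * (1 - p) ^ (n + 1 - i) * ((n + 1).choose i : ℝ) = 1 := by
    rw [← add_pow]; norm_num
  refine le_trans ?_ (le_of_eq hbin)
  conv_rhs => rw [Finset.sum_range_succ']
  have h0 : (0:ℝ) ≤ p ^ 0 * (1 - p) ^ (n + 1 - 0) * ((n + 1).choose 0 : ℝ) :=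
    mul_nonneg (mul_nonneg (pow_nonneg hp.le 0) (pow_nonneg (by linarith) _)) (Nat.cast_nonneg _)
  linarith

lemma my_sum_split {ι : Type*} [Fintype ι] [DecidableEq ι] (B : Finset ι) (f : Finset ι → ℝ) :
    ∑ T : Finset ι, f T = ∑ T1 ∈ B.powerset, ∑ T2 ∈ Bᶜ.powerset, f (T1 ∪ T2) := by
  rw [← Finset.sum_product']
  refine Finset.sum_nbij' (fun T => (T ∩ B, T \ B)) (fun Tp => Tp.1 ∪ Tp.2) ?_ ?_ ?_ ?_ ?_
  · intro T _
    simp only [Finset.mem_product, Finset.mem_powerset]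
    constructor
    · exact inter_subset_right
    · intro i hi
      simp only [Finset.mem_sdiff] at hi
      simp [Finset.mem_compl, hi.2]
  · intro Tp _; exact mem_univ _
  · intro T _
    ext i
    simp only [Finset.mem_union, Finset.mem_inter, Finset.mem_sdiff]
    tauto
  · intro Tp hTp
    simp only [Finset.mem_product, Finset.mem_powerset] at hTp
    obtain ⟨h1, h2⟩ := hTp
    have h2' : ∀ i ∈ Tp.2, i ∉ B := fun i hi => by
      have := h2 hi; simpa [Finset.mem_compl] using this
    have e1 : (Tp.1 ∪ Tp.2) ∩ B = Tp.1 := by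
      ext i
      simp only [Finset.mem_inter, Finset.mem_union]
      constructor
      · rintro ⟨h | h, hB⟩
        · exact h
        · exact absurd hB (h2' i h)
      · intro h; exact ⟨Or.inl h, h1 h⟩
    have e2 : (Tp.1 ∪ Tp.2) \ B = Tp.2 := by
      ext i
      simp only [Finset.mem_sdiff, Finset.mem_union]
      constructor
      · rintro ⟨h | h, hB⟩
        · exact absurd (h1 h) hB
        · exact h
      · intro h; exact ⟨Or.inr h, h2' i h⟩
    exact Prod.ext e1 e2
  · intro T _
    congr 1
    ext i
    simp only [Finset.mem_union, Finset.mem_inter, Finset.mem_sdiff]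
    tauto

lemma my_binr {ι : Type*} [Fintype ι] [DecidableEq ι] (B : Finset ι) (p : ℝ)
    (hp : 0 < p) (hp1 : p ≤ 1) :
    ∑ T : Finset ι, p ^ T.card * (1 - p) ^ (Fintype.card ι - T.card) *
        (1 / (((B ∩ T).card : ℝ) + 1))
      ≤ 1 / (((B.card : ℝ) + 1) * p) := by
  rw [my_sum_split B]
  have hBc : B.card + Bᶜ.card = Fintype.card ι := by
    rw [Finset.card_add_card_compl]
  have key : ∀ T1 ∈ B.powerset, ∀ T2 ∈ Bᶜ.powerset,
      p ^ (T1 ∪ T2).card * (1 - p) ^ (Fintype.card ι - (T1 ∪ T2).card) *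
          (1 / (((B ∩ (T1 ∪ T2)).card : ℝ) + 1))
        = (p ^ T1.card * (1 - p) ^ (B.card - T1.card) * (1 / ((T1.card : ℝ) + 1))) *
            (p ^ T2.card * (1 - p) ^ (Bᶜ.card - T2.card)) := by
    intro T1 h1 T2 h2
    rw [mem_powerset] at h1 h2
    have h2' : ∀ i ∈ T2, i ∉ B := fun i hi => by
      have := h2 hi; simpa [Finset.mem_compl] using this
    have hd : Disjoint T1 T2 := by
      rw [Finset.disjoint_left]
      intro i hi1 hi2
      exact h2' i hi2 (h1 hi1)
    have hBT : B ∩ (T1 ∪ T2) = T1 := by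
      ext i
      simp only [Finset.mem_inter, Finset.mem_union]
      constructor
      · rintro ⟨hB, h | h⟩
        · exact h
        · exact absurd hB (h2' i h)
      · intro h; exact ⟨h1 h, Or.inl h⟩
    have e1 : T1.card ≤ B.card := card_le_card h1
    have e2 : T2.card ≤ Bᶜ.card := card_le_card h2
    rw [hBT, card_union_of_disjoint hd,
      show Fintype.card ι - (T1.card + T2.card) = (B.card - T1.card) + (Bᶜ.card - T2.card) by
        omega, pow_add, pow_add]
    ring
  rw [Finset.sum_congr rfl (fun T1 h1 => Finset.sum_congr rfl (key T1 h1)),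
    ← Finset.sum_mul_sum, my_pb Bᶜ p (1 - p)]
  have := my_pb1 B p hp hp1
  rw [show p + (1 - p) = 1 by ring, one_pow, mul_one]
  exact this

lemma my_b2f {ι : Type*} [Fintype ι] [DecidableEq ι] (p q : ℝ) (g : Finset ι → ℝ) :
    ∑ w : ι → Bool, (∏ i, if w i then p else q) * g (univ.filter (fun i => w i))
      = ∑ T : Finset ι, p ^ T.card * q ^ (Fintype.card ι - T.card) * g T := by
  refine Finset.sum_nbij' (fun w => univ.filter (fun i => w i))
    (fun T => fun i => decide (i ∈ T)) (fun _ _ => mem_univ _) (fun _ _ => mem_univ _) ?_ ?_ ?_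
  · intro w _
    funext i
    by_cases h : w i <;> simp [h]
  · intro T _
    ext i
    simp
  · intro w _
    have hp2 : ∏ i, (if w i then p else q)
        = p ^ (univ.filter (fun i => w i)).card * q ^ (Fintype.card ι - (univ.filter (fun i => w i)).card) := by
      rw [Finset.prod_ite (fun _ => p) (fun _ => q), Finset.prod_const, Finset.prod_const]
      congr 1
      rw [Finset.filter_not, card_sdiff_of_subset (filter_subset _ _), card_univ]
    rw [hp2]

lemma my_bsum {ι : Type*} [Fintype ι] [DecidableEq ι] (p : ℝ) :
    ∑ w : ι → Bool, (∏ i, if w i then p else 1 - p) = 1 := by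
  have h := my_b2f (ι := ι) p (1 - p) (fun _ => (1 : ℝ))
  simp only [mul_one] at h
  rw [h, ← Finset.powerset_univ]
  have := my_pb (univ : Finset ι) p (1 - p)
  rw [Finset.card_univ] at this
  rw [this, show p + (1 - p) = 1 by ring, one_pow]

lemma my_push {A B : Type*} [Fintype A] [Fintype B] [DecidableEq B] (N : ℕ)
    (P : A → ℝ) (h : A → B) (G : (Fin N → B) → ℝ) :
    ∑ ω : Fin N → A, (∏ n, P (ω n)) * G (h ∘ ω)
      = ∑ σ : Fin N → B, (∏ n, ∑ a ∈ univ.filter (fun a => h a = σ n), P a) * G σ := by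
  rw [← Finset.sum_fiberwise (univ : Finset (Fin N → A)) (fun ω => h ∘ ω)
    (fun ω => (∏ n, P (ω n)) * G (h ∘ ω))]
  refine Finset.sum_congr rfl fun σ _ => ?_
  rw [Finset.prod_univ_sum, Finset.sum_mul]
  refine Finset.sum_congr ?_ ?_
  · ext ω
    simp [Fintype.mem_piFinset, funext_iff, Function.comp]
  · intro ω hω
    have hcomp : h ∘ ω = σ := by
      funext n
      simpa using Fintype.mem_piFinset.mp hω n
    rw [hcomp]

def m4 : Bool × Bool × Bool → Fin 4
  | (true, true, true) => 0
  | (true, true, false) => 1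
  | (true, false, _) => 2
  | (false, _, _) => 3

noncomputable def myG (N : ℕ) (c : ℝ) (σ : Fin N → Fin 4) : ℝ :=
  c / (((((univ.filter (fun n => ¬ σ n = 3)).card : ℝ) + 1) / (N + 1)) *
    ((((univ.filter (fun n => σ n = 0)).card : ℝ) + 1) /
      (((univ.filter (fun n => σ n = 0 ∨ σ n = 1)).card : ℝ) + 1)))

def tripleEquiv (N : ℕ) :
    ((Fin N → Bool) × (Fin N → Bool) × (Fin N → Bool)) ≃ (Fin N → Bool × Bool × Bool) where
  toFun t := fun n => (t.1 n, t.2.1 n, t.2.2 n)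
  invFun τ := (fun n => (τ n).1, fun n => (τ n).2.1, fun n => (τ n).2.2)
  left_inv t := rfl
  right_inv τ := rfl

set_option maxHeartbeats 1000000 in
lemma my_core (N : ℕ) (p1 p2 p3 : ℝ) (h1 : 0 < p1) (h1' : p1 ≤ 1) (h2 : 0 < p2) (h2' : p2 ≤ 1)
    (h3 : 0 < p3) (h3' : p3 ≤ 1) :
    ∑ τ : Fin N → Bool × Bool × Bool,
      (∏ n, (if (τ n).1 = true then p1 else 1 - p1) * (if (τ n).2.1 = true then p2 else 1 - p2) *
        (if (τ n).2.2 = true then p3 else 1 - p3)) * myG N (p1 * p3) (m4 ∘ τ) ≤ 1 := by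
  have hcnt : ∀ u v w : Fin N → Bool,
      myG N (p1 * p3) (m4 ∘ fun n => (u n, v n, w n)) =
        (p1 * p3 * ((N : ℝ) + 1) *
            (((univ.filter (fun n => u n = true ∧ v n = true)).card : ℝ) + 1) /
          (((univ.filter (fun n => u n = true)).card : ℝ) + 1)) *
        (1 / (((univ.filter (fun n => u n = true ∧ v n = true) ∩
            univ.filter (fun n => w n = true)).card : ℝ) + 1)) := by
    intro u v w
    have c3 : univ.filter (fun n => ¬ (m4 ∘ fun n => (u n, v n, w n)) n = 3)
        = univ.filter (fun n => u n = true) := by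
      apply Finset.filter_congr
      intro n _
      cases hu : u n <;> cases hv : v n <;> cases hw : w n <;> simp [m4, hu, hv, hw]
    have c0 : univ.filter (fun n => (m4 ∘ fun n => (u n, v n, w n)) n = 0)
        = univ.filter (fun n => u n = true ∧ v n = true) ∩ univ.filter (fun n => w n = true) := by
      ext n
      simp only [Function.comp, mem_filter, mem_univ, true_and, mem_inter]
      cases hu : u n <;> cases hv : v n <;> cases hw : w n <;> simp [m4]
    have c1 : univ.filter (fun n => (m4 ∘ fun n => (u n, v n, w n)) n = 0
          ∨ (m4 ∘ fun n => (u n, v n, w n)) n = 1)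
        = univ.filter (fun n => u n = true ∧ v n = true) := by
      apply Finset.filter_congr
      intro n _
      cases hu : u n <;> cases hv : v n <;> cases hw : w n <;> simp [m4, hu, hv, hw]
    rw [myG, c3, c0, c1]
    have d1 : (0:ℝ) < ((univ.filter (fun n => u n = true)).card : ℝ) + 1 := by positivity
    have d2 : (0:ℝ) < ((univ.filter (fun n => u n = true ∧ v n = true)).card : ℝ) + 1 := by
      positivity
    have d3 : (0:ℝ) < (((univ.filter (fun n => u n = true ∧ v n = true) ∩
        univ.filter (fun n => w n = true)).card : ℝ) + 1) := by positivity
    have d4 : (0:ℝ) < (N:ℝ) + 1 := by positivity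
    field_simp
  have hwb : ∀ u v : Fin N → Bool,
      ∑ w : Fin N → Bool, (∏ n, if w n = true then p3 else 1 - p3) *
          myG N (p1 * p3) (m4 ∘ fun n => (u n, v n, w n))
        ≤ p1 * ((N : ℝ) + 1) / (((univ.filter (fun n => u n = true)).card : ℝ) + 1) := by
    intro u v
    have dB : (0:ℝ) < ((univ.filter (fun n => u n = true ∧ v n = true)).card : ℝ) + 1 := by
      positivity
    have dU : (0:ℝ) < ((univ.filter (fun n => u n = true)).card : ℝ) + 1 := by positivity
    have hKnn : 0 ≤ p1 * p3 * ((N : ℝ) + 1) *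
        (((univ.filter (fun n => u n = true ∧ v n = true)).card : ℝ) + 1) /
        (((univ.filter (fun n => u n = true)).card : ℝ) + 1) := by positivity
    calc ∑ w : Fin N → Bool, (∏ n, if w n = true then p3 else 1 - p3) *
            myG N (p1 * p3) (m4 ∘ fun n => (u n, v n, w n))
        = ∑ w : Fin N → Bool, (∏ n, if w n = true then p3 else 1 - p3) *
            ((p1 * p3 * ((N : ℝ) + 1) *
                (((univ.filter (fun n => u n = true ∧ v n = true)).card : ℝ) + 1) /
              (((univ.filter (fun n => u n = true)).card : ℝ) + 1)) *
            (1 / (((univ.filter (fun n => u n = true ∧ v n = true) ∩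
                univ.filter (fun n => w n = true)).card : ℝ) + 1))) :=
          Finset.sum_congr rfl fun w _ => by rw [hcnt u v w]
      _ = ∑ T : Finset (Fin N), p3 ^ T.card * (1 - p3) ^ (Fintype.card (Fin N) - T.card) *
            ((p1 * p3 * ((N : ℝ) + 1) *
                (((univ.filter (fun n => u n = true ∧ v n = true)).card : ℝ) + 1) /
              (((univ.filter (fun n => u n = true)).card : ℝ) + 1)) *
            (1 / (((univ.filter (fun n => u n = true ∧ v n = true) ∩ T).card : ℝ) + 1))) :=
          my_b2f p3 (1 - p3) (fun T => (p1 * p3 * ((N : ℝ) + 1) *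
                (((univ.filter (fun n => u n = true ∧ v n = true)).card : ℝ) + 1) /
              (((univ.filter (fun n => u n = true)).card : ℝ) + 1)) *
            (1 / (((univ.filter (fun n => u n = true ∧ v n = true) ∩ T).card : ℝ) + 1)))
      _ = (p1 * p3 * ((N : ℝ) + 1) *
                (((univ.filter (fun n => u n = true ∧ v n = true)).card : ℝ) + 1) /
              (((univ.filter (fun n => u n = true)).card : ℝ) + 1)) *
            ∑ T : Finset (Fin N), p3 ^ T.card * (1 - p3) ^ (Fintype.card (Fin N) - T.card) *
            (1 / (((univ.filter (fun n => u n = true ∧ v n = true) ∩ T).card : ℝ) + 1)) := by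
          rw [Finset.mul_sum]
          exact Finset.sum_congr rfl fun T _ => by ring
      _ ≤ (p1 * p3 * ((N : ℝ) + 1) *
                (((univ.filter (fun n => u n = true ∧ v n = true)).card : ℝ) + 1) /
              (((univ.filter (fun n => u n = true)).card : ℝ) + 1)) *
            (1 / ((((univ.filter (fun n => u n = true ∧ v n = true)).card : ℝ) + 1) * p3)) :=
          mul_le_mul_of_nonneg_left
            (my_binr (univ.filter (fun n => u n = true ∧ v n = true)) p3 h3 h3') hKnn
      _ = p1 * ((N : ℝ) + 1) / (((univ.filter (fun n => u n = true)).card : ℝ) + 1) := by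
          field_simp
  have hPnn2 : ∀ v : Fin N → Bool, (0:ℝ) ≤ ∏ n, if v n = true then p2 else 1 - p2 :=
    fun v => Finset.prod_nonneg fun n _ => by
      by_cases h : v n = true <;> simp [h] <;> linarith
  have hPnn1 : ∀ u : Fin N → Bool, (0:ℝ) ≤ ∏ n, if u n = true then p1 else 1 - p1 :=
    fun u => Finset.prod_nonneg fun n _ => by
      by_cases h : u n = true <;> simp [h] <;> linarith
  have hvb : ∀ u : Fin N → Bool,
      ∑ v : Fin N → Bool, (∏ n, if v n = true then p2 else 1 - p2) *
          (∑ w : Fin N → Bool, (∏ n, if w n = true then p3 else 1 - p3) *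
            myG N (p1 * p3) (m4 ∘ fun n => (u n, v n, w n)))
        ≤ p1 * ((N : ℝ) + 1) / (((univ.filter (fun n => u n = true)).card : ℝ) + 1) := by
    intro u
    calc ∑ v : Fin N → Bool, (∏ n, if v n = true then p2 else 1 - p2) *
            (∑ w : Fin N → Bool, (∏ n, if w n = true then p3 else 1 - p3) *
              myG N (p1 * p3) (m4 ∘ fun n => (u n, v n, w n)))
        ≤ ∑ v : Fin N → Bool, (∏ n, if v n = true then p2 else 1 - p2) *
            (p1 * ((N : ℝ) + 1) / (((univ.filter (fun n => u n = true)).card : ℝ) + 1)) :=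
          Finset.sum_le_sum fun v _ => mul_le_mul_of_nonneg_left (hwb u v) (hPnn2 v)
      _ = (∑ v : Fin N → Bool, ∏ n, if v n = true then p2 else 1 - p2) *
            (p1 * ((N : ℝ) + 1) / (((univ.filter (fun n => u n = true)).card : ℝ) + 1)) :=
          (Finset.sum_mul _ _ _).symm
      _ = p1 * ((N : ℝ) + 1) / (((univ.filter (fun n => u n = true)).card : ℝ) + 1) := by
          rw [my_bsum p2, one_mul]
  rw [← Equiv.sum_comp (tripleEquiv N) (fun τ : Fin N → Bool × Bool × Bool =>
      (∏ n, (if (τ n).1 = true then p1 else 1 - p1) * (if (τ n).2.1 = true then p2 else 1 - p2) *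
        (if (τ n).2.2 = true then p3 else 1 - p3)) * myG N (p1 * p3) (m4 ∘ τ)),
    Fintype.sum_prod_type]
  simp only [Fintype.sum_prod_type, tripleEquiv, Equiv.coe_fn_mk]
  have hiter : ∑ u : Fin N → Bool, ∑ v : Fin N → Bool, ∑ w : Fin N → Bool,
        (∏ n, (if u n = true then p1 else 1 - p1) * (if v n = true then p2 else 1 - p2) *
          (if w n = true then p3 else 1 - p3)) *
          myG N (p1 * p3) (m4 ∘ fun n => (u n, v n, w n))
      = ∑ u : Fin N → Bool, (∏ n, if u n = true then p1 else 1 - p1) *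
          (∑ v : Fin N → Bool, (∏ n, if v n = true then p2 else 1 - p2) *
            (∑ w : Fin N → Bool, (∏ n, if w n = true then p3 else 1 - p3) *
              myG N (p1 * p3) (m4 ∘ fun n => (u n, v n, w n)))) := by
    refine Finset.sum_congr rfl fun u _ => ?_
    rw [Finset.mul_sum]
    refine Finset.sum_congr rfl fun v _ => ?_
    rw [Finset.mul_sum, Finset.mul_sum]
    refine Finset.sum_congr rfl fun w _ => ?_
    rw [Finset.prod_mul_distrib, Finset.prod_mul_distrib]
    ring
  refine le_trans (le_of_eq hiter) ?_
  calc ∑ u : Fin N → Bool, (∏ n, if u n = true then p1 else 1 - p1) *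
          (∑ v : Fin N → Bool, (∏ n, if v n = true then p2 else 1 - p2) *
            (∑ w : Fin N → Bool, (∏ n, if w n = true then p3 else 1 - p3) *
              myG N (p1 * p3) (m4 ∘ fun n => (u n, v n, w n))))
      ≤ ∑ u : Fin N → Bool, (∏ n, if u n = true then p1 else 1 - p1) *
          (p1 * ((N : ℝ) + 1) * (1 / (((univ.filter (fun n => u n = true)).card : ℝ) + 1))) := by
        refine Finset.sum_le_sum fun u _ => mul_le_mul_of_nonneg_left ?_ (hPnn1 u)
        rw [mul_one_div]
        exact hvb u
    _ = ∑ T : Finset (Fin N), p1 ^ T.card * (1 - p1) ^ (Fintype.card (Fin N) - T.card) *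
          (p1 * ((N : ℝ) + 1) * (1 / ((T.card : ℝ) + 1))) :=
        my_b2f p1 (1 - p1) (fun T => p1 * ((N : ℝ) + 1) * (1 / ((T.card : ℝ) + 1)))
    _ = (p1 * ((N : ℝ) + 1)) * ∑ T : Finset (Fin N),
          p1 ^ T.card * (1 - p1) ^ (Fintype.card (Fin N) - T.card) *
          (1 / ((((univ : Finset (Fin N)) ∩ T).card : ℝ) + 1)) := by
        rw [Finset.mul_sum]
        exact Finset.sum_congr rfl fun T _ => by rw [univ_inter]; ring
    _ ≤ (p1 * ((N : ℝ) + 1)) * (1 / ((((univ : Finset (Fin N)).card : ℝ) + 1) * p1)) :=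
        mul_le_mul_of_nonneg_left (my_binr univ p1 h1 h1') (by positivity)
    _ = 1 := by
        rw [Finset.card_univ, Fintype.card_fin]
        field_simp

lemma my_stepA {Z' : Type*} [Fintype Z'] [Nonempty Z'] {Ω : Type*} [Fintype Ω]
    (Pr : Ω → ℝ) (hPr : ∀ ω, 0 ≤ Pr ω) (t : Z' → ℝ) (U : Ω → Z' → ℝ)
    (ht : ∀ z, 0 < t z) (hU : ∀ ω z, 0 < U ω z)
    (key : ∀ z, ∑ ω, Pr ω * (t z / U ω z) ≤ 1) :
    ∑ ω, Pr ω * ((∑ z, t z) / (∑ z, U ω z)) ≤ 1 := by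
  have hpy0 : 0 < ∑ z, t z := Finset.sum_pos (fun z _ => ht z) univ_nonempty
  have hCS : ∀ ω : Ω, (∑ z, t z) / (∑ z, U ω z)
      ≤ ∑ z, (t z / (∑ z', t z')) * (t z / U ω z) := by
    intro ω
    have hF0 : 0 < ∑ z, U ω z := Finset.sum_pos (fun z _ => hU ω z) univ_nonempty
    have cs : (∑ z, t z) ^ 2 ≤ (∑ z, t z ^ 2 / U ω z) * (∑ z, U ω z) := by
      have h := Finset.sum_mul_sq_le_sq_mul_sq univ (fun z => t z / Real.sqrt (U ω z))
        (fun z => Real.sqrt (U ω z))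
      have e1 : ∀ z ∈ (univ : Finset Z'), t z / Real.sqrt (U ω z) * Real.sqrt (U ω z) = t z :=
        fun z _ => div_mul_cancel₀ _ (Real.sqrt_ne_zero'.mpr (hU ω z))
      have e2 : ∀ z ∈ (univ : Finset Z'), (t z / Real.sqrt (U ω z)) ^ 2 = t z ^ 2 / U ω z :=
        fun z _ => by rw [div_pow, Real.sq_sqrt (hU ω z).le]
      have e3 : ∀ z ∈ (univ : Finset Z'), (Real.sqrt (U ω z)) ^ 2 = U ω z :=
        fun z _ => Real.sq_sqrt (hU ω z).le
      rwa [Finset.sum_congr rfl e1, Finset.sum_congr rfl e2, Finset.sum_congr rfl e3] at h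
    have hR : ∑ z, (t z / (∑ z', t z')) * (t z / U ω z)
        = (∑ z, t z ^ 2 / U ω z) / (∑ z', t z') := by
      rw [Finset.sum_div]
      exact Finset.sum_congr rfl fun z _ => by ring
    rw [hR, div_le_div_iff₀ hF0 hpy0]
    calc (∑ z, t z) * (∑ z', t z') = (∑ z, t z) ^ 2 := by rw [sq]
      _ ≤ (∑ z, t z ^ 2 / U ω z) * (∑ z, U ω z) := cs
  calc ∑ ω, Pr ω * ((∑ z, t z) / (∑ z, U ω z))
      ≤ ∑ ω, Pr ω * (∑ z, (t z / (∑ z', t z')) * (t z / U ω z)) :=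
        Finset.sum_le_sum fun ω _ => mul_le_mul_of_nonneg_left (hCS ω) (hPr ω)
    _ = ∑ z, (t z / (∑ z', t z')) * (∑ ω, Pr ω * (t z / U ω z)) := by
        have e : ∀ ω : Ω, Pr ω * (∑ z, (t z / (∑ z', t z')) * (t z / U ω z))
            = ∑ z, (t z / (∑ z', t z')) * (Pr ω * (t z / U ω z)) := fun ω => by
          rw [Finset.mul_sum]
          exact Finset.sum_congr rfl fun z _ => by ring
        rw [Finset.sum_congr rfl (fun ω _ => e ω), Finset.sum_comm]
        exact Finset.sum_congr rfl fun z _ => (Finset.mul_sum _ _ _).symm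
    _ ≤ ∑ z, (t z / (∑ z', t z')) * 1 :=
        Finset.sum_le_sum fun z _ =>
          mul_le_mul_of_nonneg_left (key z) (div_nonneg (ht z).le hpy0.le)
    _ = 1 := by
        simp only [mul_one]
        rw [← Finset.sum_div, div_self hpy0.ne']

set_option maxHeartbeats 1000000 in
lemma my_perz {A : Type*} [Fintype A] [DecidableEq A] (P : A → ℝ) (hpos : ∀ a, 0 < P a)
    (hsum : ∑ a, P a = 1) (N : ℕ) (SA SB SC : Finset A) (hA : SA.Nonempty)
    (hAB : SA ⊆ SB) (hBC : SB ⊆ SC) :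
    ∑ ω : Fin N → A, (∏ n, P (ω n)) *
      ((∑ a ∈ SC, P a) * ((∑ a ∈ SA, P a) / (∑ a ∈ SB, P a)) /
        (((((univ.filter (fun n : Fin N => ω n ∈ SC)).card : ℝ) + 1) / (N + 1)) *
          ((((univ.filter (fun n : Fin N => ω n ∈ SA)).card : ℝ) + 1) /
            (((univ.filter (fun n : Fin N => ω n ∈ SB)).card : ℝ) + 1)))) ≤ 1 := by
  classical
  set α := ∑ a ∈ SA, P a with hαdef
  set β := ∑ a ∈ SB, P a with hβdef
  set γ := ∑ a ∈ SC, P a with hγdef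
  have hα0 : 0 < α := Finset.sum_pos (fun a _ => hpos a) hA
  have hβ0 : 0 < β := Finset.sum_pos (fun a _ => hpos a) (hA.mono hAB)
  have hγ0 : 0 < γ := Finset.sum_pos (fun a _ => hpos a) ((hA.mono hAB).mono hBC)
  have hαβ : α ≤ β := Finset.sum_le_sum_of_subset_of_nonneg hAB fun a _ _ => (hpos a).le
  have hβγ : β ≤ γ := Finset.sum_le_sum_of_subset_of_nonneg hBC fun a _ _ => (hpos a).le
  have hγ1 : γ ≤ 1 := by
    rw [← hsum]
    exact Finset.sum_le_sum_of_subset_of_nonneg (subset_univ SC) fun a _ _ => (hpos a).le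
  set h1 : A → Fin 4 :=
    fun a => if a ∈ SA then 0 else if a ∈ SB then 1 else if a ∈ SC then 2 else 3 with hh1
  have hm : ∀ a, (h1 a = 0 ↔ a ∈ SA) ∧ ((h1 a = 0 ∨ h1 a = 1) ↔ a ∈ SB)
      ∧ (¬ h1 a = 3 ↔ a ∈ SC) ∧ (h1 a = 1 ↔ (a ∈ SB ∧ a ∉ SA))
      ∧ (h1 a = 2 ↔ (a ∈ SC ∧ a ∉ SB)) ∧ (h1 a = 3 ↔ a ∉ SC) := by
    intro a
    by_cases hx : a ∈ SA
    · have hb : a ∈ SB := hAB hx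
      have hc : a ∈ SC := hBC hb
      simp [hh1, hx, hb, hc]
    · by_cases hy : a ∈ SB
      · have hc : a ∈ SC := hBC hy
        simp [hh1, hx, hy, hc]
      · by_cases hz : a ∈ SC
        · simp [hh1, hx, hy, hz]
        · simp [hh1, hx, hy, hz]
  have f0 : univ.filter (fun a => h1 a = 0) = SA := by
    ext a; simpa using (hm a).1
  have f1 : univ.filter (fun a => h1 a = 1) = SB \ SA := by
    ext a
    simp only [mem_filter, mem_univ, true_and, mem_sdiff]
    exact (hm a).2.2.2.1
  have f2 : univ.filter (fun a => h1 a = 2) = SC \ SB := by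
    ext a
    simp only [mem_filter, mem_univ, true_and, mem_sdiff]
    exact (hm a).2.2.2.2.1
  have f3 : univ.filter (fun a => h1 a = 3) = univ \ SC := by
    ext a
    simp only [mem_filter, mem_univ, true_and, mem_sdiff]
    exact (hm a).2.2.2.2.2
  have q0 : ∑ a ∈ univ.filter (fun a => h1 a = 0), P a = α := by rw [f0]
  have q1 : ∑ a ∈ univ.filter (fun a => h1 a = 1), P a = β - α := by
    rw [f1, Finset.sum_sdiff_eq_sub hAB]
  have q2 : ∑ a ∈ univ.filter (fun a => h1 a = 2), P a = γ - β := by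
    rw [f2, Finset.sum_sdiff_eq_sub hBC]
  have q3 : ∑ a ∈ univ.filter (fun a => h1 a = 3), P a = 1 - γ := by
    rw [f3, Finset.sum_sdiff_eq_sub (subset_univ SC), hsum]
  have hfib : ∀ i : Fin 4,
      ∑ b ∈ univ.filter (fun b : Bool × Bool × Bool => m4 b = i),
        ((if b.1 = true then γ else 1 - γ) * (if b.2.1 = true then β / γ else 1 - β / γ) *
          (if b.2.2 = true then α / β else 1 - α / β))
      = ∑ a ∈ univ.filter (fun a => h1 a = i), P a := by
    intro i
    fin_cases i <;> simp only [Fin.isValue, Fin.zero_eta, Fin.mk_one, Fin.reduceFinMk]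
    · rw [q0, show univ.filter (fun b : Bool × Bool × Bool => m4 b = 0)
          = {(true, true, true)} from by decide]
      rw [Finset.sum_singleton]
      simp only [if_pos rfl]
      norm_num
      field_simp
    · rw [q1, show univ.filter (fun b : Bool × Bool × Bool => m4 b = 1)
          = {(true, true, false)} from by decide]
      rw [Finset.sum_singleton]
      norm_num
      field_simp
      try ring
    · rw [q2, show univ.filter (fun b : Bool × Bool × Bool => m4 b = 2)
          = {(true, false, true), (true, false, false)} from by decide]
      rw [Finset.sum_insert (by decide), Finset.sum_singleton]
      norm_num
      field_simp
      try ring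
    · rw [q3, show univ.filter (fun b : Bool × Bool × Bool => m4 b = 3)
          = {(false, true, true), (false, true, false), (false, false, true),
              (false, false, false)} from by decide]
      rw [Finset.sum_insert (by decide), Finset.sum_insert (by decide),
        Finset.sum_insert (by decide), Finset.sum_singleton]
      norm_num
      field_simp
      try ring
  have step1 : ∀ ω : Fin N → A,
      γ * (α / β) /
        (((((univ.filter (fun n : Fin N => ω n ∈ SC)).card : ℝ) + 1) / (N + 1)) *
          ((((univ.filter (fun n : Fin N => ω n ∈ SA)).card : ℝ) + 1) /
            (((univ.filter (fun n : Fin N => ω n ∈ SB)).card : ℝ) + 1)))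
      = myG N (γ * (α / β)) (h1 ∘ ω) := by
    intro ω
    have eC : univ.filter (fun n : Fin N => ¬ (h1 ∘ ω) n = 3)
        = univ.filter (fun n : Fin N => ω n ∈ SC) :=
      Finset.filter_congr fun n _ => by simpa using (hm (ω n)).2.2.1
    have eA : univ.filter (fun n : Fin N => (h1 ∘ ω) n = 0)
        = univ.filter (fun n : Fin N => ω n ∈ SA) :=
      Finset.filter_congr fun n _ => by simpa using (hm (ω n)).1
    have eB : univ.filter (fun n : Fin N => (h1 ∘ ω) n = 0 ∨ (h1 ∘ ω) n = 1)
        = univ.filter (fun n : Fin N => ω n ∈ SB) :=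
      Finset.filter_congr fun n _ => by simpa using (hm (ω n)).2.1
    rw [myG, eC, eA, eB]
  calc ∑ ω : Fin N → A, (∏ n, P (ω n)) *
        (γ * (α / β) /
          (((((univ.filter (fun n : Fin N => ω n ∈ SC)).card : ℝ) + 1) / (N + 1)) *
            ((((univ.filter (fun n : Fin N => ω n ∈ SA)).card : ℝ) + 1) /
              (((univ.filter (fun n : Fin N => ω n ∈ SB)).card : ℝ) + 1))))
      = ∑ ω : Fin N → A, (∏ n, P (ω n)) * myG N (γ * (α / β)) (h1 ∘ ω) :=
        Finset.sum_congr rfl fun ω _ => by rw [step1 ω]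
    _ = ∑ σ : Fin N → Fin 4, (∏ n, ∑ a ∈ univ.filter (fun a => h1 a = σ n), P a) *
          myG N (γ * (α / β)) σ := my_push N P h1 (myG N (γ * (α / β)))
    _ = ∑ τ : Fin N → Bool × Bool × Bool,
          (∏ n, (if (τ n).1 = true then γ else 1 - γ) *
            (if (τ n).2.1 = true then β / γ else 1 - β / γ) *
            (if (τ n).2.2 = true then α / β else 1 - α / β)) *
          myG N (γ * (α / β)) (m4 ∘ τ) := by
        rw [my_push N (fun b : Bool × Bool × Bool =>
          (if b.1 = true then γ else 1 - γ) * (if b.2.1 = true then β / γ else 1 - β / γ) *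
            (if b.2.2 = true then α / β else 1 - α / β)) m4 (myG N (γ * (α / β)))]
        refine Finset.sum_congr rfl fun σ _ => ?_
        congr 1
        exact Finset.prod_congr rfl fun n _ => (hfib (σ n)).symm
    _ ≤ 1 := my_core N γ (β / γ) (α / β) hγ0 hγ1 (div_pos hβ0 hγ0)
        ((div_le_one hγ0).mpr hβγ) (div_pos hα0 hβ0) ((div_le_one hβ0).mpr hαβ)

/-- Main lemma (Lemma 1): for an i.i.d. sample `(Xₙ,Yₙ,Zₙ)`, `n ∈ [N]`, from a
positive probability measure `P` on `X × Y × Z`, with the back-door adjusted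
probability `p_y = ∑_z P(Z=z)·P(Y=y∣X=x,Z=z)` and its regularized estimate
`F_y = ∑_z ((|{n : Zₙ=z}|+1)/(N+1))·((|{n : (Xₙ,Yₙ,Zₙ)=(x,y,z)}|+1)/(|{n : (Xₙ,Zₙ)=(x,z)}|+1))`,
we have `E[p_y/F_y] ≤ 1`. -/
theorem main_lemma
    {X Y Z : Type*} [Fintype X] [Nonempty X] [Fintype Y] [Nonempty Y]
    [Fintype Z] [Nonempty Z] [DecidableEq X] [DecidableEq Y] [DecidableEq Z]
    (P : X × Y × Z → ℝ) (hPpos : ∀ p, 0 < P p) (hPsum : ∑ p, P p = 1)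
    (N : ℕ) (x : X) (y : Y) :
    ∑ ω : Fin N → X × Y × Z, (∏ n, P (ω n)) *
      ((∑ z, (∑ x', ∑ y', P (x', y', z)) * (P (x, y, z) / ∑ y', P (x, y', z))) /
        (∑ z, ((((univ.filter (fun n : Fin N => (ω n).2.2 = z)).card : ℝ) + 1) / (N + 1)) *
          ((((univ.filter (fun n : Fin N => ω n = (x, y, z))).card : ℝ) + 1) /
            (((univ.filter (fun n : Fin N => ((ω n).1, (ω n).2.2) = (x, z))).card : ℝ) + 1))))
      ≤ 1 := by
  classical
  have hb : ∀ z : Z, 0 < ∑ y', P (x, y', z) :=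
    fun z => Finset.sum_pos (fun _ _ => hPpos _) univ_nonempty
  have hc : ∀ z : Z, 0 < ∑ x', ∑ y', P (x', y', z) :=
    fun z => Finset.sum_pos
      (fun _ _ => Finset.sum_pos (fun _ _ => hPpos _) univ_nonempty) univ_nonempty
  refine my_stepA (fun ω : Fin N → X × Y × Z => ∏ n, P (ω n))
    (fun ω => Finset.prod_nonneg fun n _ => (hPpos _).le)
    (fun z => (∑ x', ∑ y', P (x', y', z)) * (P (x, y, z) / ∑ y', P (x, y', z)))
    (fun ω z =>
      ((((univ.filter (fun n : Fin N => (ω n).2.2 = z)).card : ℝ) + 1) / (N + 1)) *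
        ((((univ.filter (fun n : Fin N => ω n = (x, y, z))).card : ℝ) + 1) /
          (((univ.filter (fun n : Fin N => ((ω n).1, (ω n).2.2) = (x, z))).card : ℝ) + 1)))
    (fun z => mul_pos (hc z) (div_pos (hPpos _) (hb z)))
    (fun ω z => by positivity)
    ?_
  intro z
  have hSA : ({(x, y, z)} : Finset (X × Y × Z)).Nonempty := singleton_nonempty _
  have hAB : ({(x, y, z)} : Finset (X × Y × Z))
      ⊆ univ.filter (fun p => p.1 = x ∧ p.2.2 = z) := by
    intro p hp
    rw [mem_singleton] at hp
    subst hp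
    simp
  have hBC : univ.filter (fun p : X × Y × Z => p.1 = x ∧ p.2.2 = z)
      ⊆ univ.filter (fun p => p.2.2 = z) := by
    intro p hp
    simp only [mem_filter, mem_univ, true_and] at hp ⊢
    exact hp.2
  have hperz := my_perz P hPpos hPsum N _ _ _ hSA hAB hBC
  have hSAs : ∑ a ∈ ({(x, y, z)} : Finset (X × Y × Z)), P a = P (x, y, z) :=
    Finset.sum_singleton _ _
  have hSBs : ∑ a ∈ univ.filter (fun p : X × Y × Z => p.1 = x ∧ p.2.2 = z), P a
      = ∑ y', P (x, y', z) := by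
    refine Finset.sum_nbij' (fun p => p.2.1) (fun y' => (x, y', z)) ?_ ?_ ?_ ?_ ?_
    · exact fun p _ => mem_univ _
    · intro y' _
      simp
    · intro p hp
      simp only [mem_filter, mem_univ, true_and] at hp
      obtain ⟨h1, h2⟩ := hp
      rcases p with ⟨px, py', pz⟩
      simp only at h1 h2 ⊢
      rw [h1, h2]
    · intro y' _
      rfl
    · intro p hp
      simp only [mem_filter, mem_univ, true_and] at hp
      obtain ⟨h1, h2⟩ := hp
      rcases p with ⟨px, py', pz⟩
      simp only at h1 h2 ⊢
      rw [h1, h2]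
  have hSCs : ∑ a ∈ univ.filter (fun p : X × Y × Z => p.2.2 = z), P a
      = ∑ x', ∑ y', P (x', y', z) := by
    have h2 : ∑ q : X × Y, P (q.1, q.2, z) = ∑ x', ∑ y', P (x', y', z) :=
      Fintype.sum_prod_type' (f := fun x' y' => P (x', y', z))
    rw [← h2]
    refine Finset.sum_nbij' (fun p => (p.1, p.2.1)) (fun q => (q.1, q.2, z)) ?_ ?_ ?_ ?_ ?_
    · exact fun p _ => mem_univ _
    · exact fun q _ => by simp
    · intro p hp
      simp only [mem_filter, mem_univ, true_and] at hp
      rcases p with ⟨px, py', pz⟩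
      simp only at hp ⊢
      rw [hp]
    · intro q _
      rfl
    · intro p hp
      simp only [mem_filter, mem_univ, true_and] at hp
      rcases p with ⟨px, py', pz⟩
      simp only at hp ⊢
      rw [hp]
  rw [hSAs, hSBs, hSCs] at hperz
  refine le_trans (le_of_eq (Finset.sum_congr rfl fun ω _ => ?_)) hperz
  beta_reduce
  have eC : univ.filter (fun n : Fin N => (ω n).2.2 = z)
      = univ.filter (fun n : Fin N =>
          ω n ∈ univ.filter (fun p : X × Y × Z => p.2.2 = z)) :=
    Finset.filter_congr fun n _ => by simp
  have eA : univ.filter (fun n : Fin N => ω n = (x, y, z))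
      = univ.filter (fun n : Fin N => ω n ∈ ({(x, y, z)} : Finset (X × Y × Z))) :=
    Finset.filter_congr fun n _ => by simp
  have eB : univ.filter (fun n : Fin N => ((ω n).1, (ω n).2.2) = (x, z))
      = univ.filter (fun n : Fin N =>
          ω n ∈ univ.filter (fun p : X × Y × Z => p.1 = x ∧ p.2.2 = z)) :=
    Finset.filter_congr fun n _ => by simp [Prod.ext_iff]
  rw [eC, eA, eB]
end

section
/- In the setting of the main lemma, let Y_{N+1} be a random variable in Y, independent of the sample (X_n,Y_n,Z_n), n in [N], taking each value y with probability p_y. Then for any probability measure Q on Y, the random variable E := Q({Y_{N+1}}) / F_{Y_{N+1}} is an e-variable: it is nonnegative and E[Q({Y_{N+1}})/F_{Y_{N+1}}] <= 1. -/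
open Finset

lemma sum_powerset_card {ι : Type*} (S : Finset ι) (f : ℕ → ℝ) :
    ∑ T ∈ S.powerset, f T.card = ∑ k ∈ range (S.card + 1), (S.card.choose k : ℝ) * f k := by
  rw [Finset.sum_powerset]
  refine Finset.sum_congr rfl fun k hk => ?_
  have : ∑ T ∈ powersetCard k S, f T.card = ∑ T ∈ powersetCard k S, f k := by
    refine Finset.sum_congr rfl fun T hT => ?_
    rw [(Finset.mem_powersetCard.mp hT).2]
  rw [this, Finset.sum_const, Finset.card_powersetCard, nsmul_eq_mul]

lemma addpow' (a b : ℝ) (m : ℕ) :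
    ∑ k ∈ range (m + 1), (m.choose k : ℝ) * (a ^ k * b ^ (m - k)) = (a + b) ^ m := by
  rw [add_pow]
  exact Finset.sum_congr rfl fun k _ => by ring

lemma binle (m : ℕ) (a b : ℝ) (ha : 0 < a) (hb : 0 ≤ b) :
    ∑ k ∈ range (m + 1), (m.choose k : ℝ) * (a ^ k * b ^ (m - k) * (1 / (k + 1)))
      ≤ (a + b) ^ (m + 1) / ((m + 1) * a) := by
  have hma : (0:ℝ) < (m + 1) * a := by positivity
  rw [le_div_iff₀ hma, Finset.sum_mul]
  have key : ∑ k ∈ range (m + 1),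
      (m.choose k : ℝ) * (a ^ k * b ^ (m - k) * (1 / (k + 1))) * ((m + 1) * a)
      = ∑ k ∈ range (m + 1), ((m+1).choose (k+1) : ℝ) * (a ^ (k+1) * b ^ (m - k)) := by
    refine Finset.sum_congr rfl fun k _ => ?_
    have h : ((m:ℝ) + 1) * (m.choose k : ℝ) = ((m+1).choose (k+1) : ℝ) * ((k:ℝ) + 1) := by
      have := congrArg (Nat.cast (R := ℝ)) (Nat.add_one_mul_choose_eq m k)
      push_cast at this
      linarith
    have hk1 : ((k:ℝ) + 1) ≠ 0 := by positivity
    field_simp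
    linear_combination (a ^ (k+1) * b ^ (m-k)) * h
  rw [key]
  have expand : (a + b) ^ (m + 1)
      = ∑ k ∈ range (m + 2), ((m+1).choose k : ℝ) * (a ^ k * b ^ (m + 1 - k)) := by
    rw [← addpow']
  rw [expand]
  rw [Finset.sum_range_succ' (fun k => ((m+1).choose k : ℝ) * (a ^ k * b ^ (m + 1 - k))) (m+1)]
  have e2 : ∑ k ∈ range (m + 1), ((m+1).choose (k+1) : ℝ) * (a ^ (k+1) * b ^ (m + 1 - (k+1)))
      = ∑ k ∈ range (m + 1), ((m+1).choose (k+1) : ℝ) * (a ^ (k+1) * b ^ (m - k)) := by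
    simp [Nat.succ_sub_succ]
  rw [e2]
  have : (0:ℝ) ≤ ((m+1).choose 0 : ℝ) * (a ^ 0 * b ^ (m + 1 - 0)) := by positivity
  linarith


section Red
variable {α : Type*} [Fintype α] [DecidableEq α] (P : α → ℝ)
variable (A1 A2 A3 : α → Prop) [DecidablePred A1] [DecidablePred A2] [DecidablePred A3]

lemma red (h21 : ∀ p, A2 p → A1 p) (h32 : ∀ p, A3 p → A2 p) (N : ℕ) (g : ℕ → ℕ → ℕ → ℝ) :
    ∑ ω : Fin N → α, (∏ n, P (ω n)) *
        g (univ.filter fun n => A1 (ω n)).card (univ.filter fun n => A2 (ω n)).card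
          (univ.filter fun n => A3 (ω n)).card
    = ∑ S : Finset (Fin N), ∑ T ∈ S.powerset, ∑ U ∈ T.powerset,
        (∑ p ∈ univ.filter (fun p => ¬ A1 p), P p) ^ (N - S.card) *
        (∑ p ∈ univ.filter (fun p => A1 p ∧ ¬ A2 p), P p) ^ (S.card - T.card) *
        (∑ p ∈ univ.filter (fun p => A2 p ∧ ¬ A3 p), P p) ^ (T.card - U.card) *
        (∑ p ∈ univ.filter (fun p => A3 p), P p) ^ U.card *
        g S.card T.card U.card := by
  classical
  set V := Finset (Fin N) × Finset (Fin N) × Finset (Fin N)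
  set Φ : (Fin N → α) → V := fun ω =>
    (univ.filter fun n => A1 (ω n), univ.filter fun n => A2 (ω n), univ.filter fun n => A3 (ω n))
    with hΦ
  set W : V → Fin N → ℝ := fun v n =>
    ∑ p ∈ univ.filter (fun p => (A1 p ↔ n ∈ v.1) ∧ (A2 p ↔ n ∈ v.2.1) ∧ (A3 p ↔ n ∈ v.2.2)), P p
    with hW
  -- step 1: fiberwise
  have step1 : ∑ ω : Fin N → α, (∏ n, P (ω n)) *
        g (univ.filter fun n => A1 (ω n)).card (univ.filter fun n => A2 (ω n)).card
          (univ.filter fun n => A3 (ω n)).card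
      = ∑ v : V, (∏ n, W v n) * g v.1.card v.2.1.card v.2.2.card := by
    rw [← Finset.sum_fiberwise (univ : Finset (Fin N → α)) Φ
      (fun ω => (∏ n, P (ω n)) * g (univ.filter fun n => A1 (ω n)).card
        (univ.filter fun n => A2 (ω n)).card (univ.filter fun n => A3 (ω n)).card)]
    refine Finset.sum_congr rfl fun v _ => ?_
    have hmem : ∀ ω : Fin N → α, Φ ω = v ↔ ∀ n,
        (A1 (ω n) ↔ n ∈ v.1) ∧ (A2 (ω n) ↔ n ∈ v.2.1) ∧ (A3 (ω n) ↔ n ∈ v.2.2) := by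
      intro ω
      rw [hΦ, Prod.ext_iff, Prod.ext_iff]
      simp only [Finset.ext_iff, Finset.mem_filter, Finset.mem_univ, true_and]
      exact ⟨fun ⟨h1, h2, h3⟩ n => ⟨h1 n, h2 n, h3 n⟩,
        fun h => ⟨fun n => (h n).1, fun n => (h n).2.1, fun n => (h n).2.2⟩⟩
    have hconst : ∀ ω ∈ univ.filter (fun ω => Φ ω = v),
        (∏ n, P (ω n)) * g (univ.filter fun n => A1 (ω n)).card
          (univ.filter fun n => A2 (ω n)).card (univ.filter fun n => A3 (ω n)).card
        = (∏ n, P (ω n)) * g v.1.card v.2.1.card v.2.2.card := by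
      intro ω hω
      have := (Finset.mem_filter.mp hω).2
      rw [hΦ] at this
      have h1 := congrArg Prod.fst this
      have h2 := congrArg (fun z => z.2.1) this
      have h3 := congrArg (fun z => z.2.2) this
      simp only at h1 h2 h3
      rw [h1, h2, h3]
    rw [Finset.sum_congr rfl hconst, ← Finset.sum_mul]
    congr 1
    -- fiber sum of products equals product of W
    have hfib : univ.filter (fun ω => Φ ω = v)
        = Fintype.piFinset (fun n => univ.filter
            (fun p => (A1 p ↔ n ∈ v.1) ∧ (A2 p ↔ n ∈ v.2.1) ∧ (A3 p ↔ n ∈ v.2.2))) := by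
      ext ω
      simp only [Finset.mem_filter, Finset.mem_univ, true_and, Fintype.mem_piFinset, hmem ω]
    rw [hfib, ← Finset.prod_univ_sum]
  rw [step1]
  -- step 3: restrict to nested subsets
  rw [Fintype.sum_prod_type]
  simp only [Fintype.sum_prod_type]
  refine Finset.sum_congr rfl fun S _ => ?_
  -- T-sum: restrict to S.powerset
  have hTvan : ∀ T : Finset (Fin N), T ∉ S.powerset →
      ∑ U : Finset (Fin N), (∏ n, W (S, T, U) n) * g S.card T.card U.card = 0 := by
    intro T hT
    refine Finset.sum_eq_zero fun U _ => ?_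
    obtain ⟨n, hnT, hnS⟩ : ∃ n, n ∈ T ∧ n ∉ S := by
      by_contra h
      push_neg at h
      exact hT (Finset.mem_powerset.mpr fun n hn => h n hn)
    have hWz : W (S, T, U) n = 0 := by
      rw [hW]
      refine Finset.sum_eq_zero fun p hp => ?_
      exfalso
      have := (Finset.mem_filter.mp hp).2
      exact hnS (this.1.mp (h21 p (this.2.1.mpr hnT)))
    rw [Finset.prod_eq_zero (Finset.mem_univ n) hWz, zero_mul]
  rw [← Finset.sum_subset (Finset.subset_univ S.powerset) (fun T _ hT => hTvan T hT)]
  refine Finset.sum_congr rfl fun T hT => ?_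
  have hTS : T ⊆ S := Finset.mem_powerset.mp hT
  -- U-sum: restrict to T.powerset
  have hUvan : ∀ U : Finset (Fin N), U ∉ T.powerset →
      (∏ n, W (S, T, U) n) * g S.card T.card U.card = 0 := by
    intro U hU
    obtain ⟨n, hnU, hnT⟩ : ∃ n, n ∈ U ∧ n ∉ T := by
      by_contra h
      push_neg at h
      exact hU (Finset.mem_powerset.mpr fun n hn => h n hn)
    have hWz : W (S, T, U) n = 0 := by
      rw [hW]
      refine Finset.sum_eq_zero fun p hp => ?_
      exfalso
      have := (Finset.mem_filter.mp hp).2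
      exact hnT (this.2.1.mp (h32 p (this.2.2.mpr hnU)))
    rw [Finset.prod_eq_zero (Finset.mem_univ n) hWz, zero_mul]
  rw [← Finset.sum_subset (Finset.subset_univ T.powerset) (fun U _ hU => hUvan U hU)]
  refine Finset.sum_congr rfl fun U hU => ?_
  have hUT : U ⊆ T := Finset.mem_powerset.mp hU
  -- step 4: evaluate the product for nested subsets
  congr 1
  have hsplit1 := Finset.prod_sdiff (f := W (S, T, U)) (Finset.subset_univ S)
  have hsplit2 := Finset.prod_sdiff (f := W (S, T, U)) hTS
  have hsplit3 := Finset.prod_sdiff (f := W (S, T, U)) hUT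
  have e0 : ∏ n ∈ univ \ S, W (S, T, U) n
      = (∑ p ∈ univ.filter (fun p => ¬ A1 p), P p) ^ (N - S.card) := by
    rw [Finset.prod_congr rfl (fun n hn => ?_), Finset.prod_const,
      Finset.card_sdiff_of_subset (Finset.subset_univ S), Finset.card_univ, Fintype.card_fin]
    have hnS : n ∉ S := (Finset.mem_sdiff.mp hn).2
    have hnT : n ∉ T := fun h => hnS (hTS h)
    have hnU : n ∉ U := fun h => hnT (hUT h)
    rw [hW]
    refine Finset.sum_congr (Finset.filter_congr fun p _ => ?_) fun _ _ => rfl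
    simp only [hnS, hnT, hnU, iff_false]
    constructor
    · rintro ⟨h1, _, _⟩; exact h1
    · intro h1; exact ⟨h1, fun h => h1 (h21 p h), fun h => h1 (h21 p (h32 p h))⟩
  have e1 : ∏ n ∈ S \ T, W (S, T, U) n
      = (∑ p ∈ univ.filter (fun p => A1 p ∧ ¬ A2 p), P p) ^ (S.card - T.card) := by
    rw [Finset.prod_congr rfl (fun n hn => ?_), Finset.prod_const, Finset.card_sdiff_of_subset hTS]
    have hnS : n ∈ S := (Finset.mem_sdiff.mp hn).1
    have hnT : n ∉ T := (Finset.mem_sdiff.mp hn).2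
    have hnU : n ∉ U := fun h => hnT (hUT h)
    rw [hW]
    refine Finset.sum_congr (Finset.filter_congr fun p _ => ?_) fun _ _ => rfl
    simp only [hnS, hnT, hnU, iff_true, iff_false]
    constructor
    · rintro ⟨h1, h2, _⟩; exact ⟨h1, h2⟩
    · rintro ⟨h1, h2⟩; exact ⟨h1, h2, fun h => h2 (h32 p h)⟩
  have e2 : ∏ n ∈ T \ U, W (S, T, U) n
      = (∑ p ∈ univ.filter (fun p => A2 p ∧ ¬ A3 p), P p) ^ (T.card - U.card) := by
    rw [Finset.prod_congr rfl (fun n hn => ?_), Finset.prod_const, Finset.card_sdiff_of_subset hUT]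
    have hnT : n ∈ T := (Finset.mem_sdiff.mp hn).1
    have hnS : n ∈ S := hTS hnT
    have hnU : n ∉ U := (Finset.mem_sdiff.mp hn).2
    rw [hW]
    refine Finset.sum_congr (Finset.filter_congr fun p _ => ?_) fun _ _ => rfl
    simp only [hnS, hnT, hnU, iff_true, iff_false]
    constructor
    · rintro ⟨_, h2, h3⟩; exact ⟨h2, h3⟩
    · rintro ⟨h2, h3⟩; exact ⟨h21 p h2, h2, h3⟩
  have e3 : ∏ n ∈ U, W (S, T, U) n
      = (∑ p ∈ univ.filter (fun p => A3 p), P p) ^ U.card := by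
    rw [Finset.prod_congr rfl (fun n hn => ?_), Finset.prod_const]
    have hnU : n ∈ U := hn
    have hnT : n ∈ T := hUT hnU
    have hnS : n ∈ S := hTS hnT
    rw [hW]
    refine Finset.sum_congr (Finset.filter_congr fun p _ => ?_) fun _ _ => rfl
    simp only [hnS, hnT, hnU, iff_true]
    constructor
    · rintro ⟨_, _, h3⟩; exact h3
    · intro h3; exact ⟨h21 p (h32 p h3), h32 p h3, h3⟩
  calc ∏ n, W (S, T, U) n
      = (∏ n ∈ univ \ S, W (S, T, U) n) * ((∏ n ∈ S \ T, W (S, T, U) n) *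
          ((∏ n ∈ T \ U, W (S, T, U) n) * (∏ n ∈ U, W (S, T, U) n))) := by
        rw [hsplit3, hsplit2, hsplit1]
    _ = _ := by rw [e0, e1, e2, e3]; ring

end Red

lemma gen_weights {w0 w1 w2 t : ℝ} (hw0 : 0 ≤ w0) (hw1 : 0 ≤ w1) (hw2 : 0 ≤ w2)
    (ht : 0 < t) (htot : w0 + (w1 + (w2 + t)) = 1) (N : ℕ) :
    ∑ S : Finset (Fin N), ∑ T ∈ S.powerset, ∑ U ∈ T.powerset,
      w0 ^ (N - S.card) * w1 ^ (S.card - T.card) * w2 ^ (T.card - U.card) * t ^ U.card *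
        (((T.card : ℝ) + 1) / (((S.card : ℝ) + 1) * ((U.card : ℝ) + 1)))
    ≤ (w2 + t) / ((N + 1) * (w1 + (w2 + t)) * t) := by
  have hs : 0 < w2 + t := by linarith
  have hq : 0 < w1 + (w2 + t) := by linarith
  calc ∑ S : Finset (Fin N), ∑ T ∈ S.powerset, ∑ U ∈ T.powerset,
      w0 ^ (N - S.card) * w1 ^ (S.card - T.card) * w2 ^ (T.card - U.card) * t ^ U.card *
        (((T.card : ℝ) + 1) / (((S.card : ℝ) + 1) * ((U.card : ℝ) + 1)))
      ≤ ∑ S : Finset (Fin N), ∑ T ∈ S.powerset,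
          w0 ^ (N - S.card) * w1 ^ (S.card - T.card) * (w2 + t) ^ (T.card + 1) *
            (1 / (((S.card : ℝ) + 1) * t)) := by
        refine Finset.sum_le_sum fun S _ => Finset.sum_le_sum fun T _ => ?_
        have h1 : ∑ U ∈ T.powerset,
            w0 ^ (N - S.card) * w1 ^ (S.card - T.card) * w2 ^ (T.card - U.card) * t ^ U.card *
              (((T.card : ℝ) + 1) / (((S.card : ℝ) + 1) * ((U.card : ℝ) + 1)))
            = (w0 ^ (N - S.card) * w1 ^ (S.card - T.card) *
                (((T.card : ℝ) + 1) / ((S.card : ℝ) + 1))) *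
              ∑ U ∈ T.powerset, t ^ U.card * w2 ^ (T.card - U.card) * (1 / ((U.card : ℝ) + 1)) := by
          rw [Finset.mul_sum]
          refine Finset.sum_congr rfl fun U _ => ?_
          rw [div_mul_eq_div_div, mul_one_div]
          ring
        rw [h1, sum_powerset_card T (fun k => t ^ k * w2 ^ (T.card - k) * (1 / ((k : ℝ) + 1)))]
        have h2 := binle T.card t w2 ht hw2
        have hpre : 0 ≤ w0 ^ (N - S.card) * w1 ^ (S.card - T.card) *
            (((T.card : ℝ) + 1) / ((S.card : ℝ) + 1)) := by positivity
        calc _ ≤ (w0 ^ (N - S.card) * w1 ^ (S.card - T.card) *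
              (((T.card : ℝ) + 1) / ((S.card : ℝ) + 1))) *
              ((t + w2) ^ (T.card + 1) / (((T.card : ℝ) + 1) * t)) :=
            mul_le_mul_of_nonneg_left h2 hpre
          _ = w0 ^ (N - S.card) * w1 ^ (S.card - T.card) * (w2 + t) ^ (T.card + 1) *
              (1 / (((S.card : ℝ) + 1) * t)) := by
            have hT1 : ((T.card : ℝ) + 1) ≠ 0 := by positivity
            have hS1 : ((S.card : ℝ) + 1) ≠ 0 := by positivity
            rw [add_comm t w2]
            field_simp
    _ = ∑ S : Finset (Fin N), w0 ^ (N - S.card) * (w2 + t) * (w1 + (w2 + t)) ^ S.card *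
          (1 / (((S.card : ℝ) + 1) * t)) := by
        refine Finset.sum_congr rfl fun S _ => ?_
        have h3 : ∑ T ∈ S.powerset,
            w0 ^ (N - S.card) * w1 ^ (S.card - T.card) * (w2 + t) ^ (T.card + 1) *
              (1 / (((S.card : ℝ) + 1) * t))
            = (w0 ^ (N - S.card) * (w2 + t) * (1 / (((S.card : ℝ) + 1) * t))) *
              ∑ T ∈ S.powerset, ((w2 + t) ^ T.card * w1 ^ (S.card - T.card)) := by
          rw [Finset.mul_sum]
          refine Finset.sum_congr rfl fun T _ => ?_
          rw [pow_succ]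
          ring
        rw [h3, sum_powerset_card S (fun k => (w2 + t) ^ k * w1 ^ (S.card - k)),
          addpow' (w2 + t) w1 S.card, add_comm (w2 + t) w1]
        ring
    _ = ((w2 + t) * (1 / t)) * ∑ k ∈ range (N + 1),
          ((N.choose k : ℝ)) * ((w1 + (w2 + t)) ^ k * w0 ^ (N - k) * (1 / ((k : ℝ) + 1))) := by
        have huniv : (univ : Finset (Finset (Fin N)))
            = (univ : Finset (Fin N)).powerset := (Finset.powerset_univ).symm
        rw [huniv, sum_powerset_card (univ : Finset (Fin N))
          (fun k => w0 ^ (N - k) * (w2 + t) * (w1 + (w2 + t)) ^ k * (1 / (((k : ℝ) + 1) * t)))]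
        rw [Finset.mul_sum]
        simp only [Finset.card_univ, Fintype.card_fin]
        refine Finset.sum_congr rfl fun k _ => ?_
        have hk : ((k : ℝ) + 1) ≠ 0 := by positivity
        field_simp
    _ ≤ ((w2 + t) * (1 / t)) *
          ((w1 + (w2 + t) + w0) ^ (N + 1) / ((N + 1) * (w1 + (w2 + t)))) := by
        refine mul_le_mul_of_nonneg_left ?_ (by positivity)
        exact binle N (w1 + (w2 + t)) w0 hq hw0
    _ = (w2 + t) / ((N + 1) * (w1 + (w2 + t)) * t) := by
        have h1 : w1 + (w2 + t) + w0 = 1 := by linarith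
        rw [h1, one_pow]
        have hN : ((N : ℝ) + 1) ≠ 0 := by positivity
        field_simp
        try ring
        try exact Or.inl trivial

lemma gen {α : Type*} [Fintype α] [DecidableEq α] (P : α → ℝ)
    (A1 A2 A3 : α → Prop) [DecidablePred A1] [DecidablePred A2] [DecidablePred A3]
    (hP : ∀ p, 0 ≤ P p) (hsum : ∑ p, P p = 1)
    (h21 : ∀ p, A2 p → A1 p) (h32 : ∀ p, A3 p → A2 p)
    (ht : 0 < ∑ p ∈ univ.filter (fun p => A3 p), P p) (N : ℕ) :
    ∑ ω : Fin N → α, (∏ n, P (ω n)) *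
      ((((univ.filter fun n => A2 (ω n)).card : ℝ) + 1) /
        ((((univ.filter fun n => A1 (ω n)).card : ℝ) + 1) *
          (((univ.filter fun n => A3 (ω n)).card : ℝ) + 1)))
    ≤ (∑ p ∈ univ.filter (fun p => A2 p), P p) /
        ((N + 1) * (∑ p ∈ univ.filter (fun p => A1 p), P p) *
          (∑ p ∈ univ.filter (fun p => A3 p), P p)) := by
  classical
  have hw0 : 0 ≤ ∑ p ∈ univ.filter (fun p => ¬ A1 p), P p :=
    Finset.sum_nonneg fun p _ => hP p
  have hw1 : 0 ≤ ∑ p ∈ univ.filter (fun p => A1 p ∧ ¬ A2 p), P p :=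
    Finset.sum_nonneg fun p _ => hP p
  have hw2 : 0 ≤ ∑ p ∈ univ.filter (fun p => A2 p ∧ ¬ A3 p), P p :=
    Finset.sum_nonneg fun p _ => hP p
  have hs2 : ∑ p ∈ univ.filter (fun p => A2 p), P p
      = (∑ p ∈ univ.filter (fun p => A2 p ∧ ¬ A3 p), P p)
        + ∑ p ∈ univ.filter (fun p => A3 p), P p := by
    have h := Finset.sum_filter_add_sum_filter_not (univ.filter (fun p => A2 p)) A3 P
    rw [Finset.filter_filter, Finset.filter_filter] at h
    have e : univ.filter (fun p => A2 p ∧ A3 p) = univ.filter (fun p => A3 p) :=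
      Finset.filter_congr fun p _ => ⟨And.right, fun hh => ⟨h32 p hh, hh⟩⟩
    rw [e] at h
    linarith
  have hq2 : ∑ p ∈ univ.filter (fun p => A1 p), P p
      = (∑ p ∈ univ.filter (fun p => A1 p ∧ ¬ A2 p), P p)
        + ((∑ p ∈ univ.filter (fun p => A2 p ∧ ¬ A3 p), P p)
            + ∑ p ∈ univ.filter (fun p => A3 p), P p) := by
    have h := Finset.sum_filter_add_sum_filter_not (univ.filter (fun p => A1 p)) A2 P
    rw [Finset.filter_filter, Finset.filter_filter] at h
    have e : univ.filter (fun p => A1 p ∧ A2 p) = univ.filter (fun p => A2 p) :=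
      Finset.filter_congr fun p _ => ⟨And.right, fun hh => ⟨h21 p hh, hh⟩⟩
    rw [e, hs2] at h
    linarith
  have htot : (∑ p ∈ univ.filter (fun p => ¬ A1 p), P p)
      + ((∑ p ∈ univ.filter (fun p => A1 p ∧ ¬ A2 p), P p)
        + ((∑ p ∈ univ.filter (fun p => A2 p ∧ ¬ A3 p), P p)
            + ∑ p ∈ univ.filter (fun p => A3 p), P p)) = 1 := by
    have h := Finset.sum_filter_add_sum_filter_not (univ : Finset α) A1 P
    rw [hq2] at h
    rw [hsum] at h
    linarith
  rw [hs2, hq2]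
  refine le_trans (le_of_eq (red P A1 A2 A3 h21 h32 N
    (fun k1 k2 k3 => ((k2 : ℝ) + 1) / (((k1 : ℝ) + 1) * ((k3 : ℝ) + 1))))) ?_
  exact gen_weights hw0 hw1 hw2 ht htot N


lemma ml_abstract {Z : Type*} [Fintype Z] [Nonempty Z] {Ω : Type*} [Fintype Ω]
    (W : Ω → ℝ) (hW : ∀ ω, 0 ≤ W ω)
    (A : Z → ℝ) (hA : ∀ z, 0 < A z)
    (B : Ω → Z → ℝ) (hB : ∀ ω z, 0 < B ω z)
    (hkey : ∀ z, ∑ ω, W ω * (1 / B ω z) ≤ 1 / A z) :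
    ∑ ω, W ω * ((∑ z, A z) / (∑ z, B ω z)) ≤ 1 := by
  have hp : 0 < ∑ z, A z := Finset.sum_pos (fun z _ => hA z) Finset.univ_nonempty
  have hF : ∀ ω, 0 < ∑ z, B ω z :=
    fun ω => Finset.sum_pos (fun z _ => hB ω z) Finset.univ_nonempty
  have hCS : ∀ ω, (∑ z, A z) / (∑ z, B ω z) ≤ (∑ z, (A z) ^ 2 / B ω z) / (∑ z, A z) := by
    intro ω
    rw [div_le_div_iff₀ (hF ω) hp]
    have h := Finset.sum_mul_sq_le_sq_mul_sq univ
      (fun z => A z / Real.sqrt (B ω z)) (fun z => Real.sqrt (B ω z))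
    have e1 : ∀ z ∈ (univ : Finset Z),
        (A z / Real.sqrt (B ω z)) * Real.sqrt (B ω z) = A z := fun z _ =>
      div_mul_cancel₀ _ (Real.sqrt_ne_zero'.mpr (hB ω z))
    have e2 : ∀ z ∈ (univ : Finset Z),
        (A z / Real.sqrt (B ω z)) ^ 2 = A z ^ 2 / B ω z := fun z _ => by
      rw [div_pow, Real.sq_sqrt (hB ω z).le]
    have e3 : ∀ z ∈ (univ : Finset Z), (Real.sqrt (B ω z)) ^ 2 = B ω z := fun z _ =>
      Real.sq_sqrt (hB ω z).le
    rw [Finset.sum_congr rfl e1, Finset.sum_congr rfl e2, Finset.sum_congr rfl e3] at h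
    calc (∑ z, A z) * (∑ z, A z) = (∑ z, A z) ^ 2 := (sq _).symm
      _ ≤ (∑ z, A z ^ 2 / B ω z) * (∑ z, B ω z) := h
  calc ∑ ω, W ω * ((∑ z, A z) / (∑ z, B ω z))
      ≤ ∑ ω, W ω * ((∑ z, (A z) ^ 2 / B ω z) / (∑ z, A z)) :=
        Finset.sum_le_sum fun ω _ => mul_le_mul_of_nonneg_left (hCS ω) (hW ω)
    _ = ∑ z, ((A z) ^ 2 / (∑ z', A z')) * ∑ ω, W ω * (1 / B ω z) := by
        have e : ∀ ω ∈ (univ : Finset Ω), W ω * ((∑ z, (A z) ^ 2 / B ω z) / (∑ z', A z'))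
            = ∑ z, ((A z) ^ 2 / (∑ z', A z')) * (W ω * (1 / B ω z)) := by
          intro ω _
          rw [Finset.sum_div, Finset.mul_sum]
          exact Finset.sum_congr rfl fun z _ => by ring
        rw [Finset.sum_congr rfl e, Finset.sum_comm]
        exact Finset.sum_congr rfl fun z _ => (Finset.mul_sum _ _ _).symm
    _ ≤ ∑ z, ((A z) ^ 2 / (∑ z', A z')) * (1 / A z) :=
        Finset.sum_le_sum fun z _ => mul_le_mul_of_nonneg_left (hkey z)
          (by have := hA z; positivity)
    _ = ∑ z, A z / (∑ z', A z') := by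
        refine Finset.sum_congr rfl fun z _ => ?_
        have hz : A z ≠ 0 := (hA z).ne'
        field_simp
    _ = 1 := by rw [← Finset.sum_div, div_self hp.ne']


set_option maxHeartbeats 2000000 in
/-- Corollary 1: in the setting of the main lemma, if `Y_{N+1}` is independent
of the sample and takes each value `y` with probability
`p_y = ∑_z P(Z=z)·P(Y=y∣X=x,Z=z)`, then for any probability measure `Q` on `Y`
the random variable `E = Q({Y_{N+1}})/F_{Y_{N+1}}` is an e-variable: it is
nonnegative and its expectation (over the joint law of the sample and
`Y_{N+1}`) is at most 1. -/
theorem causal_e_variable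
    {X Y Z : Type*} [Fintype X] [Nonempty X] [Fintype Y] [Nonempty Y]
    [Fintype Z] [Nonempty Z] [DecidableEq X] [DecidableEq Y] [DecidableEq Z]
    (P : X × Y × Z → ℝ) (hPpos : ∀ p, 0 < P p) (hPsum : ∑ p, P p = 1)
    (Q : Y → ℝ) (hQnonneg : ∀ y, 0 ≤ Q y) (hQsum : ∑ y, Q y = 1)
    (N : ℕ) (x : X) :
    (∀ (ω : Fin N → X × Y × Z) (y : Y),
      0 ≤ Q y /
        (∑ z, ((((univ.filter (fun n : Fin N => (ω n).2.2 = z)).card : ℝ) + 1) / (N + 1)) *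
          ((((univ.filter (fun n : Fin N => ω n = (x, y, z))).card : ℝ) + 1) /
            (((univ.filter (fun n : Fin N => ((ω n).1, (ω n).2.2) = (x, z))).card : ℝ) + 1)))) ∧
    ∑ ω : Fin N → X × Y × Z, ∑ y : Y, (∏ n, P (ω n)) *
      (∑ z, (∑ x', ∑ y', P (x', y', z)) * (P (x, y, z) / ∑ y', P (x, y', z))) *
      (Q y /
        (∑ z, ((((univ.filter (fun n : Fin N => (ω n).2.2 = z)).card : ℝ) + 1) / (N + 1)) *
          ((((univ.filter (fun n : Fin N => ω n = (x, y, z))).card : ℝ) + 1) /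
            (((univ.filter (fun n : Fin N => ((ω n).1, (ω n).2.2) = (x, z))).card : ℝ) + 1))))
      ≤ 1 := by
  have hP0 : ∀ p, 0 ≤ P p := fun p => (hPpos p).le
  have hBpos : ∀ (y : Y) (ω : Fin N → X × Y × Z) (z : Z),
      (0:ℝ) < ((((univ.filter (fun n : Fin N => (ω n).2.2 = z)).card : ℝ) + 1) / (N + 1)) *
        ((((univ.filter (fun n : Fin N => ω n = (x, y, z))).card : ℝ) + 1) /
          (((univ.filter (fun n : Fin N => ((ω n).1, (ω n).2.2) = (x, z))).card : ℝ) + 1)) := by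
    intro y ω z
    positivity
  have hFpos : ∀ (y : Y) (ω : Fin N → X × Y × Z),
      (0:ℝ) < ∑ z, ((((univ.filter (fun n : Fin N => (ω n).2.2 = z)).card : ℝ) + 1) / (N + 1)) *
        ((((univ.filter (fun n : Fin N => ω n = (x, y, z))).card : ℝ) + 1) /
          (((univ.filter (fun n : Fin N => ((ω n).1, (ω n).2.2) = (x, z))).card : ℝ) + 1)) :=
    fun y ω => Finset.sum_pos (fun z _ => hBpos y ω z) Finset.univ_nonempty
  constructor
  · intro ω y
    exact div_nonneg (hQnonneg y) (hFpos y ω).le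
  have hqpos : ∀ z : Z, (0:ℝ) < ∑ x', ∑ y', P (x', y', z) := fun z =>
    Finset.sum_pos (fun x' _ => Finset.sum_pos (fun y' _ => hPpos _) Finset.univ_nonempty)
      Finset.univ_nonempty
  have hspos : ∀ z : Z, (0:ℝ) < ∑ y', P (x, y', z) := fun z =>
    Finset.sum_pos (fun y' _ => hPpos _) Finset.univ_nonempty
  -- sum identities
  have hqz : ∀ z : Z, ∑ p ∈ univ.filter (fun p : X × Y × Z => p.2.2 = z), P p
      = ∑ x', ∑ y', P (x', y', z) := by
    intro z
    rw [Finset.sum_filter, Fintype.sum_prod_type]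
    refine Finset.sum_congr rfl fun x' _ => ?_
    rw [Fintype.sum_prod_type]
    refine Finset.sum_congr rfl fun y' _ => ?_
    simp
  have hsz : ∀ z : Z, ∑ p ∈ univ.filter (fun p : X × Y × Z => (p.1, p.2.2) = (x, z)), P p
      = ∑ y', P (x, y', z) := by
    intro z
    rw [Finset.sum_filter, Fintype.sum_prod_type]
    simp only [Prod.mk.injEq]
    rw [Finset.sum_eq_single x]
    · rw [Fintype.sum_prod_type]
      refine Finset.sum_congr rfl fun y' _ => ?_
      simp
    · intro b _ hb
      refine Finset.sum_eq_zero fun q _ => ?_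
      simp [hb]
    · intro h
      exact absurd (Finset.mem_univ x) h
  have htz : ∀ (y : Y) (z : Z),
      ∑ p ∈ univ.filter (fun p : X × Y × Z => p = (x, y, z)), P p = P (x, y, z) := by
    intro y z
    rw [Finset.sum_filter]
    simp
  -- the key per-z estimate, from `gen`
  have hKEY : ∀ (y : Y) (z : Z),
      ∑ ω : Fin N → X × Y × Z, (∏ n, P (ω n)) *
        ((((univ.filter (fun n : Fin N => ((ω n).1, (ω n).2.2) = (x, z))).card : ℝ) + 1) /
          ((((univ.filter (fun n : Fin N => (ω n).2.2 = z)).card : ℝ) + 1) *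
            (((univ.filter (fun n : Fin N => ω n = (x, y, z))).card : ℝ) + 1)))
      ≤ (∑ y', P (x, y', z)) /
          ((N + 1) * (∑ x', ∑ y', P (x', y', z)) * P (x, y, z)) := by
    intro y z
    rw [← hqz z, ← hsz z, ← htz y z]
    refine gen P (fun p => p.2.2 = z) (fun p => (p.1, p.2.2) = (x, z))
      (fun p => p = (x, y, z)) hP0 hPsum (fun p h => congrArg Prod.snd h)
      (fun p h => by rw [h]) ?_ N
    rw [htz y z]
    exact hPpos _
  -- the main lemma: for each y, the expectation of p_y / F_y is at most 1
  have ML : ∀ y : Y,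
      ∑ ω : Fin N → X × Y × Z, (∏ n, P (ω n)) *
        ((∑ z, (∑ x', ∑ y', P (x', y', z)) * (P (x, y, z) / ∑ y', P (x, y', z))) /
          (∑ z, ((((univ.filter (fun n : Fin N => (ω n).2.2 = z)).card : ℝ) + 1) / (N + 1)) *
            ((((univ.filter (fun n : Fin N => ω n = (x, y, z))).card : ℝ) + 1) /
              (((univ.filter (fun n : Fin N => ((ω n).1, (ω n).2.2) = (x, z))).card : ℝ) + 1))))
      ≤ 1 := by
    intro y
    have hW' : ∀ ω : Fin N → X × Y × Z, 0 ≤ ∏ n, P (ω n) :=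
      fun ω => Finset.prod_nonneg fun n _ => hP0 _
    have hA' : ∀ z : Z,
        0 < (∑ x', ∑ y', P (x', y', z)) * (P (x, y, z) / ∑ y', P (x, y', z)) :=
      fun z => mul_pos (hqpos z) (div_pos (hPpos _) (hspos z))
    have hkey' : ∀ z : Z, ∑ ω : Fin N → X × Y × Z, (∏ n, P (ω n)) *
        (1 / (((((univ.filter (fun n : Fin N => (ω n).2.2 = z)).card : ℝ) + 1) / (N + 1)) *
          ((((univ.filter (fun n : Fin N => ω n = (x, y, z))).card : ℝ) + 1) /
            (((univ.filter (fun n : Fin N => ((ω n).1, (ω n).2.2) = (x, z))).card : ℝ) + 1))))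
        ≤ 1 / ((∑ x', ∑ y', P (x', y', z)) * (P (x, y, z) / ∑ y', P (x, y', z))) := by
      intro z
      have hNz : (0:ℝ) < (N : ℝ) + 1 := by positivity
      have hinv : ∀ ω : Fin N → X × Y × Z,
          (1:ℝ) / (((((univ.filter (fun n : Fin N => (ω n).2.2 = z)).card : ℝ) + 1) / (N + 1)) *
            ((((univ.filter (fun n : Fin N => ω n = (x, y, z))).card : ℝ) + 1) /
              (((univ.filter (fun n : Fin N => ((ω n).1, (ω n).2.2) = (x, z))).card : ℝ) + 1)))
          = ((N : ℝ) + 1) *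
            ((((univ.filter (fun n : Fin N => ((ω n).1, (ω n).2.2) = (x, z))).card : ℝ) + 1) /
              ((((univ.filter (fun n : Fin N => (ω n).2.2 = z)).card : ℝ) + 1) *
                (((univ.filter (fun n : Fin N => ω n = (x, y, z))).card : ℝ) + 1))) := by
        intro ω
        have h1 : (0:ℝ) < ((univ.filter (fun n : Fin N => (ω n).2.2 = z)).card : ℝ) + 1 := by
          positivity
        have h2 : (0:ℝ) < ((univ.filter (fun n : Fin N =>
            ((ω n).1, (ω n).2.2) = (x, z))).card : ℝ) + 1 := by positivity
        have h3 : (0:ℝ) < ((univ.filter (fun n : Fin N => ω n = (x, y, z))).card : ℝ) + 1 := by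
          positivity
        field_simp
        try ring
      calc ∑ ω : Fin N → X × Y × Z, (∏ n, P (ω n)) *
            (1 / (((((univ.filter (fun n : Fin N => (ω n).2.2 = z)).card : ℝ) + 1) / (N + 1)) *
              ((((univ.filter (fun n : Fin N => ω n = (x, y, z))).card : ℝ) + 1) /
                (((univ.filter (fun n : Fin N => ((ω n).1, (ω n).2.2) = (x, z))).card : ℝ) + 1))))
          = ((N : ℝ) + 1) * ∑ ω : Fin N → X × Y × Z, (∏ n, P (ω n)) *
              ((((univ.filter (fun n : Fin N => ((ω n).1, (ω n).2.2) = (x, z))).card : ℝ) + 1) /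
                ((((univ.filter (fun n : Fin N => (ω n).2.2 = z)).card : ℝ) + 1) *
                  (((univ.filter (fun n : Fin N => ω n = (x, y, z))).card : ℝ) + 1))) := by
            rw [Finset.mul_sum]
            exact Finset.sum_congr rfl fun ω _ => by rw [hinv ω]; ring
        _ ≤ ((N : ℝ) + 1) * ((∑ y', P (x, y', z)) /
              ((N + 1) * (∑ x', ∑ y', P (x', y', z)) * P (x, y, z))) :=
            mul_le_mul_of_nonneg_left (hKEY y z) hNz.le
        _ = 1 / ((∑ x', ∑ y', P (x', y', z)) * (P (x, y, z) / ∑ y', P (x, y', z))) := by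
            have h1 := hqpos z
            have h2 := hspos z
            have h3 := hPpos (x, y, z)
            field_simp
    exact ml_abstract _ hW' _ hA' _ (hBpos y) hkey'
  -- final assembly
  calc ∑ ω : Fin N → X × Y × Z, ∑ y : Y, (∏ n, P (ω n)) *
        (∑ z, (∑ x', ∑ y', P (x', y', z)) * (P (x, y, z) / ∑ y', P (x, y', z))) *
        (Q y /
          (∑ z, ((((univ.filter (fun n : Fin N => (ω n).2.2 = z)).card : ℝ) + 1) / (N + 1)) *
            ((((univ.filter (fun n : Fin N => ω n = (x, y, z))).card : ℝ) + 1) /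
              (((univ.filter (fun n : Fin N => ((ω n).1, (ω n).2.2) = (x, z))).card : ℝ) + 1))))
      = ∑ y : Y, Q y * ∑ ω : Fin N → X × Y × Z, (∏ n, P (ω n)) *
          ((∑ z, (∑ x', ∑ y', P (x', y', z)) * (P (x, y, z) / ∑ y', P (x, y', z))) /
            (∑ z, ((((univ.filter (fun n : Fin N => (ω n).2.2 = z)).card : ℝ) + 1) / (N + 1)) *
              ((((univ.filter (fun n : Fin N => ω n = (x, y, z))).card : ℝ) + 1) /
                (((univ.filter (fun n : Fin N =>
                    ((ω n).1, (ω n).2.2) = (x, z))).card : ℝ) + 1)))) := by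
        rw [Finset.sum_comm]
        refine Finset.sum_congr rfl fun y _ => ?_
        rw [Finset.mul_sum]
        exact Finset.sum_congr rfl fun ω _ => by ring
    _ ≤ ∑ y : Y, Q y * 1 :=
        Finset.sum_le_sum fun y _ => mul_le_mul_of_nonneg_left (ML y) (hQnonneg y)
    _ = 1 := by simp [hQsum]
end

section
/- Let X, Z be finite nonempty types. Suppose Z_1,...,Z_N are i.i.d. with a positive law mu on Z, and each X_n is generated (possibly depending on Z_n and on all X_i, Z_i for i < n) in an arbitrary way, while conditionally on all objects (X_n, Z_n)_{n<=N} the labels Y_1,...,Y_N are independent with Y_n having law Q(· | X_n, Z_n) for a fixed positive conditional law Q. Fix x, y, z. Then E[ p_{y,z} / F_{y,z} ] <= 1, where p_{y,z} := mu(z)·Q(y | x, z) and F_{y,z} := ((|{n : Z_n=z}|+1)/(N+1)) · ((|{n : (X_n,Y_n,Z_n)=(x,y,z)}|+1)/(|{n : (X_n,Z_n)=(x,z)}|+1)). -/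
open Finset


lemma sum_pi_succ {n : ℕ} {α : Type*} [Fintype α] (h : (Fin (n+1) → α) → ℝ) :
    ∑ g : Fin (n+1) → α, h g = ∑ b : α, ∑ g : Fin n → α, h (Fin.cons b g) := by
  rw [← (Fin.consEquiv (fun _ : Fin (n+1) => α)).sum_comp h, Fintype.sum_prod_type]
  rfl

lemma card_filter_fin_succ {n : ℕ} (P : Fin (n+1) → Prop) [DecidablePred P] :
    (Finset.univ.filter P).card
      = (if P 0 then 1 else 0) + (Finset.univ.filter (fun i : Fin n => P i.succ)).card := by
  rw [Finset.card_filter, Finset.card_filter, Fin.sum_univ_succ]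

lemma pmf_pascal (m : ℕ) (q : ℝ) (F : ℕ → ℝ) :
    q * ∑ k ∈ Finset.range (m+1), (m.choose k : ℝ) * q^k * (1-q)^(m-k) * F (k+1)
      + (1-q) * ∑ k ∈ Finset.range (m+1), (m.choose k : ℝ) * q^k * (1-q)^(m-k) * F k
    = ∑ k ∈ Finset.range (m+2), ((m+1).choose k : ℝ) * q^k * (1-q)^(m+1-k) * F k := by
  rw [Finset.sum_range_succ' (fun k => ((m+1).choose k : ℝ) * q^k * (1-q)^(m+1-k) * F k) (m+1)]
  have h1 : ∀ k ∈ Finset.range (m+1),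
      (((m+1).choose (k+1) : ℝ)) * q^(k+1) * (1-q)^(m+1-(k+1)) * F (k+1)
      = (m.choose k : ℝ) * q^(k+1) * (1-q)^(m-k) * F (k+1)
        + (m.choose (k+1) : ℝ) * q^(k+1) * (1-q)^(m-k) * F (k+1) := by
    intro k hk
    rw [Nat.succ_sub_succ, Nat.choose_succ_succ]
    push_cast
    ring
  rw [Finset.sum_congr rfl h1, Finset.sum_add_distrib]
  rw [Finset.mul_sum, Finset.mul_sum]
  have h2 : ∀ k ∈ Finset.range (m+1),
      q * ((m.choose k : ℝ) * q^k * (1-q)^(m-k) * F (k+1))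
      = (m.choose k : ℝ) * q^(k+1) * (1-q)^(m-k) * F (k+1) := by
    intro k hk; ring
  rw [Finset.sum_congr rfl h2]
  have h3 : ∀ k ∈ Finset.range (m+1),
      (1-q) * ((m.choose k : ℝ) * q^k * (1-q)^(m-k) * F k)
      = (m.choose k : ℝ) * q^k * (1-q)^(m+1-k) * F k := by
    intro k hk
    rw [Finset.mem_range] at hk
    have : m+1-k = (m-k)+1 := by omega
    rw [this, pow_succ]
    ring
  rw [Finset.sum_congr rfl h3]
  rw [Finset.sum_range_succ' (fun k => (m.choose k : ℝ) * q^k * (1-q)^(m+1-k) * F k) m]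
  have h4 : ∀ k ∈ Finset.range m,
      (m.choose (k+1) : ℝ) * q^(k+1) * (1-q)^(m+1-(k+1)) * F (k+1)
      = (m.choose (k+1) : ℝ) * q^(k+1) * (1-q)^(m-k) * F (k+1) := by
    intro k hk
    rw [Nat.succ_sub_succ]
  rw [Finset.sum_congr rfl h4]
  have h5 : ∑ k ∈ Finset.range (m+1), (m.choose (k+1) : ℝ) * q^(k+1) * (1-q)^(m-k) * F (k+1)
      = ∑ k ∈ Finset.range m, (m.choose (k+1) : ℝ) * q^(k+1) * (1-q)^(m-k) * F (k+1) := by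
    rw [Finset.sum_range_succ, Nat.choose_succ_self]
    simp
  rw [h5]
  simp only [Nat.choose_zero_right, Nat.sub_zero, pow_zero]
  push_cast
  ring

lemma binom_push {α : Type*} [Fintype α] [DecidableEq α] :
    ∀ (n : ℕ) (p : Fin n → α → ℝ), (∀ i, ∑ b, p i b = 1) →
      ∀ (a : α) (q : ℝ) (act : Fin n → Bool), (∀ i, act i = true → p i a = q) →
      ∀ (F : ℕ → ℝ),
    ∑ g : Fin n → α, (∏ i, p i (g i)) *
        F ((Finset.univ.filter (fun i => act i = true ∧ g i = a)).card)
      = ∑ k ∈ Finset.range ((Finset.univ.filter (fun i => act i = true)).card + 1),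
          ((((Finset.univ.filter (fun i => act i = true)).card).choose k : ℝ)
            * q^k * (1-q)^((Finset.univ.filter (fun i => act i = true)).card - k) * F k) := by
  intro n
  induction n with
  | zero =>
    intro p hp1 a q act hact F
    have h0 : (Finset.univ.filter (fun i : Fin 0 => act i = true)).card = 0 := by simp
    rw [h0]
    simp
  | succ n ih =>
    intro p hp1 a q act hact F
    rw [sum_pi_succ]
    have hterm : ∀ (b : α) (g : Fin n → α),
        (∏ i, p i ((Fin.cons b g : Fin (n+1) → α) i)) *
          F ((Finset.univ.filter (fun i => act i = true ∧ (Fin.cons b g : Fin (n+1) → α) i = a)).card)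
        = p 0 b * ((∏ i : Fin n, p i.succ (g i)) *
            F ((if act 0 = true ∧ b = a then 1 else 0)
              + (Finset.univ.filter (fun i : Fin n => act i.succ = true ∧ g i = a)).card)) := by
      intro b g
      rw [Fin.prod_univ_succ]
      simp only [Fin.cons_zero, Fin.cons_succ]
      rw [card_filter_fin_succ (fun i => act i = true ∧ (Fin.cons b g : Fin (n+1) → α) i = a)]
      simp only [Fin.cons_zero, Fin.cons_succ]
      ring
    simp only [hterm]
    have hm := card_filter_fin_succ (fun i : Fin (n+1) => act i = true)
    have ih' := ih (fun i => p i.succ) (fun i => hp1 i.succ) a q (fun i => act i.succ)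
      (fun i h => hact i.succ h)
    set m' := (Finset.univ.filter (fun i : Fin n => act i.succ = true)).card with hm'
    by_cases h0 : act 0 = true
    · rw [if_pos h0] at hm
      have hp0a : p 0 a = q := hact 0 h0
      rw [← Finset.add_sum_erase Finset.univ _ (Finset.mem_univ a)]
      have eA : (∑ g : Fin n → α, p 0 a * ((∏ i : Fin n, p i.succ (g i)) *
            F ((if act 0 = true ∧ a = a then 1 else 0)
              + (Finset.univ.filter (fun i : Fin n => act i.succ = true ∧ g i = a)).card)))
          = q * ∑ k ∈ Finset.range (m'+1),
              ((m'.choose k : ℝ) * q^k * (1-q)^(m'-k) * F (k+1)) := by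
        rw [← ih' (fun k => F (k+1)), Finset.mul_sum]
        refine Finset.sum_congr rfl fun g _ => ?_
        rw [if_pos ⟨h0, rfl⟩, hp0a, Nat.add_comm 1]
      have eB : ∀ b ∈ Finset.univ.erase a,
          (∑ g : Fin n → α, p 0 b * ((∏ i : Fin n, p i.succ (g i)) *
            F ((if act 0 = true ∧ b = a then 1 else 0)
              + (Finset.univ.filter (fun i : Fin n => act i.succ = true ∧ g i = a)).card)))
          = p 0 b * ∑ k ∈ Finset.range (m'+1),
              ((m'.choose k : ℝ) * q^k * (1-q)^(m'-k) * F k) := by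
        intro b hb
        have hba : b ≠ a := (Finset.mem_erase.mp hb).1
        rw [← ih' F, Finset.mul_sum]
        refine Finset.sum_congr rfl fun g _ => ?_
        rw [if_neg (fun h => hba h.2), Nat.zero_add]
      rw [eA, Finset.sum_congr rfl eB, ← Finset.sum_mul]
      have hsum_erase : ∑ b ∈ Finset.univ.erase a, p 0 b = 1 - q := by
        rw [Finset.sum_erase_eq_sub (Finset.mem_univ a), hp1 0, hp0a]
      rw [hsum_erase, hm]
      have h1m : 1 + m' = m' + 1 := Nat.add_comm 1 m'
      rw [h1m]
      exact pmf_pascal m' q F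
    · rw [if_neg h0, Nat.zero_add] at hm
      have e : ∀ b ∈ (Finset.univ : Finset α),
          (∑ g : Fin n → α, p 0 b * ((∏ i : Fin n, p i.succ (g i)) *
            F ((if act 0 = true ∧ b = a then 1 else 0)
              + (Finset.univ.filter (fun i : Fin n => act i.succ = true ∧ g i = a)).card)))
          = p 0 b * ∑ k ∈ Finset.range (m'+1),
              ((m'.choose k : ℝ) * q^k * (1-q)^(m'-k) * F k) := by
        intro b _
        rw [← ih' F, Finset.mul_sum]
        refine Finset.sum_congr rfl fun g _ => ?_
        rw [if_neg (fun h => h0 h.1), Nat.zero_add]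
      rw [Finset.sum_congr rfl e, ← Finset.sum_mul, hp1 0, one_mul, hm]

lemma binom_ineq (m : ℕ) (q : ℝ) (hq : 0 < q) (hq1 : q ≤ 1) :
    ∑ k ∈ Finset.range (m+1),
        (m.choose k : ℝ) * q^k * (1-q)^(m-k) * (((m:ℝ)+1)/((k:ℝ)+1))
      ≤ 1/q := by
  have hq' : q ≠ 0 := ne_of_gt hq
  have hterm : ∀ k ∈ Finset.range (m+1),
      (m.choose k : ℝ) * q^k * (1-q)^(m-k) * (((m:ℝ)+1)/((k:ℝ)+1))
      = (1/q) * (((m+1).choose (k+1) : ℝ) * q^(k+1) * (1-q)^((m+1)-(k+1))) := by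
    intro k hk
    have hnat : (m+1) * m.choose k = (m+1).choose (k+1) * (k+1) := by
      rw [← Nat.add_one_mul_choose_eq]
    have hreal : ((m:ℝ)+1) * (m.choose k : ℝ) = ((m+1).choose (k+1) : ℝ) * ((k:ℝ)+1) := by
      exact_mod_cast congrArg (Nat.cast : ℕ → ℝ) hnat
    rw [Nat.succ_sub_succ]
    have hk1 : ((k:ℝ)+1) ≠ 0 := by positivity
    field_simp
    linear_combination (q ^ k * (1 - q) ^ (m - k) * q) * hreal
  rw [Finset.sum_congr rfl hterm, ← Finset.mul_sum]
  have hb : ∑ k ∈ Finset.range (m+1+1),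
      ((m+1).choose k : ℝ) * q^k * (1-q)^((m+1)-k) = 1 := by
    have h := add_pow q (1-q) (m+1)
    simp only [add_sub_cancel, one_pow] at h
    have e : ∀ k ∈ Finset.range (m+1+1),
        ((m+1).choose k : ℝ) * q^k * (1-q)^((m+1)-k)
          = q^k * (1-q)^((m+1)-k) * ((m+1).choose k : ℝ) := fun k _ => by ring
    rw [Finset.sum_congr rfl e]
    exact h.symm
  have h2 := Finset.sum_range_succ'
    (fun k => ((m+1).choose k : ℝ) * q^k * (1-q)^((m+1)-k)) (m+1)
  rw [hb] at h2
  have hf0 : ((m+1).choose 0 : ℝ) * q^0 * (1-q)^((m+1)-0) = (1-q)^(m+1) := by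
    simp
  rw [hf0] at h2
  have hshift : ∑ k ∈ Finset.range (m+1),
      (((m+1).choose (k+1) : ℝ) * q^(k+1) * (1-q)^((m+1)-(k+1)))
      = 1 - (1-q)^(m+1) := by linarith
  rw [hshift]
  have h1 : 0 ≤ (1-q)^(m+1) := pow_nonneg (by linarith) _
  have hle : 1 - (1-q)^(m+1) ≤ 1 := by linarith
  calc (1/q) * (1 - (1-q)^(m+1)) ≤ (1/q) * 1 :=
        mul_le_mul_of_nonneg_left hle (by positivity)
    _ = 1/q := mul_one _

lemma key_exp_bound {α : Type*} [Fintype α] [DecidableEq α] (n : ℕ)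
    (p : Fin n → α → ℝ) (hp1 : ∀ i, ∑ b, p i b = 1)
    (a : α) (q : ℝ) (hq : 0 < q) (hq1 : q ≤ 1)
    (act : Fin n → Bool) (hact : ∀ i, act i = true → p i a = q) :
    ∑ g : Fin n → α, (∏ i, p i (g i)) *
      ((((Finset.univ.filter (fun i => act i = true)).card : ℝ) + 1) /
        (((Finset.univ.filter (fun i => act i = true ∧ g i = a)).card : ℝ) + 1))
      ≤ 1 / q := by
  have h := binom_push n p hp1 a q act hact
    (fun k => (((Finset.univ.filter (fun i => act i = true)).card : ℝ) + 1) / ((k:ℝ)+1))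
  rw [h]
  exact binom_ineq _ q hq hq1


/-- Per-`z` bound under the Y-oblivious interpretation (Lemma 2): the
confounders `Zₙ` are i.i.d. with positive law `μ`; each object `Xₙ` is produced
by an arbitrary (possibly randomized, via a seed `u` with law `ν`) strategy `f`
that may depend on the confounders `Z₁,…,Zₙ` observed so far (and hence on all
past objects) but not on past labels; and, given the objects and confounders,
the labels `Yₙ` are independent with `Yₙ ∼ Q(·∣Xₙ,Zₙ)` for a fixed positive
conditional law `Q`. Then `E[p_{y,z}/F_{y,z}] ≤ 1` where
`p_{y,z} = μ(z)·Q(y∣x,z)` and `F_{y,z}` is as in the main lemma. -/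
theorem per_z_bound_Y_oblivious
    {X Y Z U : Type*} [Fintype X] [Nonempty X] [Fintype Y] [Nonempty Y]
    [Fintype Z] [Nonempty Z] [Fintype U] [Nonempty U]
    [DecidableEq X] [DecidableEq Y] [DecidableEq Z]
    (μ : Z → ℝ) (hμpos : ∀ z, 0 < μ z) (hμsum : ∑ z, μ z = 1)
    (ν : U → ℝ) (hνnonneg : ∀ u, 0 ≤ ν u) (hνsum : ∑ u, ν u = 1)
    (Q : X → Z → Y → ℝ) (hQpos : ∀ x z y, 0 < Q x z y)
    (hQsum : ∀ x z, ∑ y, Q x z y = 1)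
    (N : ℕ) (f : Fin N → (Fin N → Z) → U → X)
    (hf : ∀ (n : Fin N) (zs zs' : Fin N → Z) (u : U),
      (∀ i : Fin N, i ≤ n → zs i = zs' i) → f n zs u = f n zs' u)
    (x : X) (y : Y) (z : Z) :
    ∑ u : U, ∑ zs : Fin N → Z, ∑ ys : Fin N → Y,
      ν u * (∏ n, μ (zs n)) * (∏ n, Q (f n zs u) (zs n) (ys n)) *
        ((μ z * Q x z y) /
          (((((univ.filter (fun n : Fin N => zs n = z)).card : ℝ) + 1) / (N + 1)) *
            ((((univ.filter (fun n : Fin N =>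
                  (f n zs u, ys n, zs n) = (x, y, z))).card : ℝ) + 1) /
              (((univ.filter (fun n : Fin N =>
                  (f n zs u, zs n) = (x, z))).card : ℝ) + 1))))
      ≤ 1 := by
  classical
  have hq : 0 < Q x z y := hQpos x z y
  have hq1 : Q x z y ≤ 1 := by
    rw [← hQsum x z]
    exact Finset.single_le_sum (fun b _ => (hQpos x z b).le) (Finset.mem_univ y)
  have hμz : 0 < μ z := hμpos z
  have hμ1 : μ z ≤ 1 := by
    rw [← hμsum]
    exact Finset.single_le_sum (fun b _ => (hμpos b).le) (Finset.mem_univ z)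
  -- inner (labels) bound, for each u, zs
  have hinner : ∀ (u : U) (zs : Fin N → Z),
      ∑ ys : Fin N → Y, (∏ n, Q (f n zs u) (zs n) (ys n)) *
        ((((univ.filter (fun n : Fin N => (f n zs u, zs n) = (x, z))).card : ℝ) + 1) /
          (((univ.filter (fun n : Fin N =>
              (f n zs u, ys n, zs n) = (x, y, z))).card : ℝ) + 1))
      ≤ 1 / Q x z y := by
    intro u zs
    have h := key_exp_bound N (fun n b => Q (f n zs u) (zs n) b)
      (fun n => hQsum _ _) y (Q x z y) hq hq1
      (fun n => decide ((f n zs u, zs n) = (x, z)))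
      (fun n hn => by
        rw [decide_eq_true_eq, Prod.mk.injEq] at hn
        show Q (f n zs u) (zs n) y = Q x z y
        rw [hn.1, hn.2])
    have hfilt1 : (Finset.univ.filter
          (fun n : Fin N => decide ((f n zs u, zs n) = (x, z)) = true))
        = univ.filter (fun n : Fin N => (f n zs u, zs n) = (x, z)) := by
      apply Finset.filter_congr
      intro n _
      simp
    have hfilt2 : ∀ ys : Fin N → Y,
        (Finset.univ.filter
            (fun n : Fin N => decide ((f n zs u, zs n) = (x, z)) = true ∧ ys n = y))
        = univ.filter (fun n : Fin N => (f n zs u, ys n, zs n) = (x, y, z)) := by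
      intro ys
      apply Finset.filter_congr
      intro n _
      simp only [decide_eq_true_eq, Prod.mk.injEq]
      tauto
    simp only [hfilt1] at h
    calc ∑ ys : Fin N → Y, (∏ n, Q (f n zs u) (zs n) (ys n)) *
          ((((univ.filter (fun n : Fin N => (f n zs u, zs n) = (x, z))).card : ℝ) + 1) /
            (((univ.filter (fun n : Fin N =>
                (f n zs u, ys n, zs n) = (x, y, z))).card : ℝ) + 1))
        = ∑ ys : Fin N → Y, (∏ n, Q (f n zs u) (zs n) (ys n)) *
          ((((univ.filter (fun n : Fin N => (f n zs u, zs n) = (x, z))).card : ℝ) + 1) /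
            (((Finset.univ.filter (fun n : Fin N =>
                decide ((f n zs u, zs n) = (x, z)) = true ∧ ys n = y)).card : ℝ) + 1)) := by
          refine Finset.sum_congr rfl fun ys _ => ?_
          rw [hfilt2 ys]
      _ ≤ 1 / Q x z y := h
  -- outer (confounders) bound
  have houter :
      ∑ zs : Fin N → Z, (∏ n, μ (zs n)) *
        (((N:ℝ)+1) / (((univ.filter (fun n : Fin N => zs n = z)).card : ℝ) + 1))
      ≤ 1 / μ z := by
    have h := key_exp_bound N (fun _ b => μ b) (fun _ => hμsum) z (μ z) hμz hμ1
      (fun _ => true) (fun _ _ => rfl)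
    simp only [Finset.filter_true, true_and, Finset.card_univ, Fintype.card_fin] at h ⊢
    exact h
  -- pointwise rearrangement of each term
  have hpt : ∀ (u : U) (zs : Fin N → Z) (ys : Fin N → Y),
      ν u * (∏ n, μ (zs n)) * (∏ n, Q (f n zs u) (zs n) (ys n)) *
        ((μ z * Q x z y) /
          (((((univ.filter (fun n : Fin N => zs n = z)).card : ℝ) + 1) / (N + 1)) *
            ((((univ.filter (fun n : Fin N =>
                  (f n zs u, ys n, zs n) = (x, y, z))).card : ℝ) + 1) /
              (((univ.filter (fun n : Fin N =>
                  (f n zs u, zs n) = (x, z))).card : ℝ) + 1))))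
      = (ν u * (μ z * Q x z y)) *
          (((∏ n, μ (zs n)) *
            (((N:ℝ)+1) / (((univ.filter (fun n : Fin N => zs n = z)).card : ℝ) + 1))) *
           ((∏ n, Q (f n zs u) (zs n) (ys n)) *
            ((((univ.filter (fun n : Fin N => (f n zs u, zs n) = (x, z))).card : ℝ) + 1) /
              (((univ.filter (fun n : Fin N =>
                  (f n zs u, ys n, zs n) = (x, y, z))).card : ℝ) + 1)))) := by
    intro u zs ys
    have hA : (((univ.filter (fun n : Fin N => zs n = z)).card : ℝ) + 1) ≠ 0 := by positivity
    have hN : ((N:ℝ) + 1) ≠ 0 := by positivity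
    have hB : (((univ.filter (fun n : Fin N => (f n zs u, zs n) = (x, z))).card : ℝ) + 1) ≠ 0 := by
      positivity
    have hC : (((univ.filter (fun n : Fin N =>
        (f n zs u, ys n, zs n) = (x, y, z))).card : ℝ) + 1) ≠ 0 := by positivity
    field_simp
  calc ∑ u : U, ∑ zs : Fin N → Z, ∑ ys : Fin N → Y,
      ν u * (∏ n, μ (zs n)) * (∏ n, Q (f n zs u) (zs n) (ys n)) *
        ((μ z * Q x z y) /
          (((((univ.filter (fun n : Fin N => zs n = z)).card : ℝ) + 1) / (N + 1)) *
            ((((univ.filter (fun n : Fin N =>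
                  (f n zs u, ys n, zs n) = (x, y, z))).card : ℝ) + 1) /
              (((univ.filter (fun n : Fin N =>
                  (f n zs u, zs n) = (x, z))).card : ℝ) + 1))))
      = ∑ u : U, (ν u * (μ z * Q x z y)) *
          ∑ zs : Fin N → Z,
            ((∏ n, μ (zs n)) *
              (((N:ℝ)+1) / (((univ.filter (fun n : Fin N => zs n = z)).card : ℝ) + 1))) *
            ∑ ys : Fin N → Y,
              ((∏ n, Q (f n zs u) (zs n) (ys n)) *
                ((((univ.filter (fun n : Fin N => (f n zs u, zs n) = (x, z))).card : ℝ) + 1) /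
                  (((univ.filter (fun n : Fin N =>
                      (f n zs u, ys n, zs n) = (x, y, z))).card : ℝ) + 1))) := by
        refine Finset.sum_congr rfl fun u _ => ?_
        rw [Finset.mul_sum]
        refine Finset.sum_congr rfl fun zs _ => ?_
        rw [Finset.mul_sum, Finset.mul_sum]
        exact Finset.sum_congr rfl fun ys _ => hpt u zs ys
    _ ≤ ∑ u : U, (ν u * (μ z * Q x z y)) * ((1 / μ z) * (1 / Q x z y)) := by
        refine Finset.sum_le_sum fun u _ => ?_
        refine mul_le_mul_of_nonneg_left ?_ (mul_nonneg (hνnonneg u) (by positivity))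
        have step1 : ∀ zs : Fin N → Z,
            ((∏ n, μ (zs n)) *
              (((N:ℝ)+1) / (((univ.filter (fun n : Fin N => zs n = z)).card : ℝ) + 1))) *
            (∑ ys : Fin N → Y,
              ((∏ n, Q (f n zs u) (zs n) (ys n)) *
                ((((univ.filter (fun n : Fin N => (f n zs u, zs n) = (x, z))).card : ℝ) + 1) /
                  (((univ.filter (fun n : Fin N =>
                      (f n zs u, ys n, zs n) = (x, y, z))).card : ℝ) + 1))))
            ≤ ((∏ n, μ (zs n)) *
              (((N:ℝ)+1) / (((univ.filter (fun n : Fin N => zs n = z)).card : ℝ) + 1))) *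
              (1 / Q x z y) := by
          intro zs
          refine mul_le_mul_of_nonneg_left (hinner u zs) ?_
          have hw : (0:ℝ) ≤ ∏ n, μ (zs n) :=
            Finset.prod_nonneg (fun n _ => (hμpos (zs n)).le)
          exact mul_nonneg hw (by positivity)
        refine le_trans (Finset.sum_le_sum (fun zs _ => step1 zs)) ?_
        rw [← Finset.sum_mul]
        exact mul_le_mul_of_nonneg_right houter (by positivity)
    _ = ∑ u : U, ν u := by
        refine Finset.sum_congr rfl fun u _ => ?_
        have hμ0 : μ z ≠ 0 := ne_of_gt hμz
        have hq0 : Q x z y ≠ 0 := ne_of_gt hq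
        field_simp
    _ = 1 := hνsum
end
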